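/- arXiv:1909.00616 — 5 statements merged into one kernel-verified Lean document; each statement's English description precedes it below -/
import Mathlib

section
/- Let X be a real-valued integrable random variable with E[X] < 0, let X(n) be i.i.d. copies of X, S(n) = X(1)+...+X(n), and for x > 0 let τ_x = inf{n ≥ 1 : x + S(n) ≤ 0}. Then E[τ_x] < ∞. -/
open MeasureTheory ProbabilityTheory Filter Set
open scoped ENNReal NNReal

/-- Partial sums `S(n) = X(0) + ... + X(n-1)` of the increments. -/
noncomputable def partialSum {Ω : Type*} (X : ℕ → Ω → ℝ) (n : ℕ) (ω : Ω) : ℝ :=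
  ∑ i ∈ Finset.range n, X i ω

/-- The exit time `τ_x = inf {n ≥ 1 : x + S(n) ≤ 0}`, with value `⊤` if no such `n` exists. -/
noncomputable def exitTime {Ω : Type*} (X : ℕ → Ω → ℝ) (x : ℝ) (ω : Ω) : ℕ∞ :=
  sInf {n : ℕ∞ | ∃ m : ℕ, (m : ℕ∞) = n ∧ 1 ≤ m ∧ x + partialSum X m ω ≤ 0}

section Aux

variable {Ω : Type*}

lemma partialSum_zero (X : ℕ → Ω → ℝ) (ω : Ω) : partialSum X 0 ω = 0 := by
  simp [partialSum]

lemma partialSum_succ (X : ℕ → Ω → ℝ) (n : ℕ) (ω : Ω) :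
    partialSum X (n + 1) ω = partialSum X n ω + X n ω := by
  simp [partialSum, Finset.sum_range_succ]

lemma measurable_partialSum [MeasurableSpace Ω] {X : ℕ → Ω → ℝ}
    (h : ∀ n, Measurable (X n)) (n : ℕ) : Measurable (partialSum X n) :=
  Finset.measurable_sum _ (fun i _ => h i)

/-- The event of not having exited by time `k`. -/
def noExitSet (X : ℕ → Ω → ℝ) (x : ℝ) (k : ℕ) : Set Ω :=
  {ω | ∀ m : ℕ, 1 ≤ m → m ≤ k → 0 < x + partialSum X m ω}

lemma mem_noExitSet_iff {X : ℕ → Ω → ℝ} {x : ℝ} {k : ℕ} {ω : Ω} :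
    ω ∈ noExitSet X x k ↔ ∀ m : ℕ, 1 ≤ m → m ≤ k → 0 < x + partialSum X m ω := Iff.rfl

lemma noExitSet_succ_subset (X : ℕ → Ω → ℝ) (x : ℝ) (k : ℕ) :
    noExitSet X x (k + 1) ⊆ noExitSet X x k :=
  fun _ h m h1 hm => h m h1 (hm.trans (Nat.le_succ k))

lemma pos_of_mem_noExitSet {X : ℕ → Ω → ℝ} {x : ℝ} (hx : 0 < x) {k : ℕ} {ω : Ω}
    (h : ω ∈ noExitSet X x k) : 0 < x + partialSum X k ω := by
  cases k with
  | zero => simpa [partialSum_zero] using hx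
  | succ n => exact h (n + 1) (Nat.succ_le_succ (Nat.zero_le n)) le_rfl

lemma measurableSet_noExitSet [MeasurableSpace Ω] {X : ℕ → Ω → ℝ}
    (h : ∀ n, Measurable (X n)) (x : ℝ) (k : ℕ) : MeasurableSet (noExitSet X x k) := by
  have : noExitSet X x k = ⋂ m ∈ Set.Icc 1 k, {ω | 0 < x + partialSum X m ω} := by
    ext ω
    simp [noExitSet, Set.mem_Icc, and_imp]
  rw [this]
  exact MeasurableSet.biInter (Set.to_countable _) fun m _ =>
    measurableSet_lt measurable_const (measurable_const.add (measurable_partialSum h m))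

lemma lt_exitTime_iff {X : ℕ → Ω → ℝ} {x : ℝ} {ω : Ω} {k : ℕ} :
    (k : ℕ∞) < exitTime X x ω ↔ ω ∈ noExitSet X x k := by
  constructor
  · intro h m h1 hk
    by_contra hle
    push_neg at hle
    have hmem : (m : ℕ∞) ∈
        {n : ℕ∞ | ∃ m' : ℕ, (m' : ℕ∞) = n ∧ 1 ≤ m' ∧ x + partialSum X m' ω ≤ 0} :=
      ⟨m, rfl, h1, hle⟩
    have h2 : exitTime X x ω ≤ (m : ℕ∞) := sInf_le hmem
    have h3 : exitTime X x ω ≤ (k : ℕ∞) := h2.trans (by exact_mod_cast hk)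
    exact absurd h (not_lt.mpr h3)
  · intro h
    have hlow : ((k + 1 : ℕ) : ℕ∞) ≤ exitTime X x ω := by
      apply le_sInf
      rintro n ⟨m, rfl, h1, hle⟩
      have hmk : ¬ m ≤ k := fun hmk => absurd hle (not_le.mpr (h m h1 hmk))
      exact_mod_cast Nat.succ_le_of_lt (Nat.lt_of_not_le hmk)
    exact lt_of_lt_of_le (by exact_mod_cast Nat.lt_succ_self k) hlow

lemma enat_cast_eq_tsum (a : ℕ∞) :
    (a : ℝ≥0∞) = ∑' k : ℕ, if (k : ℕ∞) < a then (1 : ℝ≥0∞) else 0 := by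
  induction a using ENat.recTopCoe with
  | top =>
    have : ∀ k : ℕ, (if ((k : ℕ∞) < (⊤ : ℕ∞)) then (1 : ℝ≥0∞) else 0) = 1 := fun k =>
      if_pos (ENat.coe_lt_top k)
    rw [tsum_congr this, ENNReal.tsum_const_eq_top_of_ne_zero one_ne_zero, ENat.toENNReal_top]
  | coe n =>
    rw [tsum_eq_sum (s := Finset.range n) (fun k hk => by
      rw [if_neg]
      exact fun h => hk (Finset.mem_range.mpr (by exact_mod_cast h)))]
    rw [Finset.sum_congr rfl (fun k hk => if_pos (by
      exact_mod_cast Finset.mem_range.mp hk))]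
    simp

end Aux

/-- if `X` is integrable with `E[X] < 0`, then `E[τ_x] < ∞` for every `x > 0`. -/
theorem expectation_exitTime_lt_top
    {Ω : Type*} [MeasureSpace Ω] [IsProbabilityMeasure (ℙ : Measure Ω)]
    (X : ℕ → Ω → ℝ) (X0 : Ω → ℝ)
    (hmeas : ∀ n, Measurable (X n))
    (hindep : iIndepFun X ℙ)
    (hident : ∀ n, IdentDistrib (X n) X0 ℙ ℙ)
    (hint : Integrable X0 ℙ)
    (hdrift : ∫ ω, X0 ω ∂ℙ < 0)
    (x : ℝ) (hx : 0 < x) :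
    ∫⁻ ω, (exitTime X x ω : ℝ≥0∞) ∂ℙ < ⊤ := by
  classical
  -- an auxiliary bound for truncations
  have habs : ∀ (t c : ℝ), 0 ≤ c → |max t (-c)| ≤ |t| := by
    intro t c hc
    rcases le_total (-c) t with h | h
    · rw [max_eq_left h]
    · rw [max_eq_right h, abs_of_nonpos (neg_nonpos.mpr hc), neg_neg]
      calc c ≤ -t := by linarith
        _ ≤ |t| := neg_le_abs t
  -- choose a truncation level `c ≥ 1` with negative truncated mean
  obtain ⟨c, hc1, hcneg⟩ : ∃ c : ℝ, 1 ≤ c ∧ ∫ ω, max (X0 ω) (-c) ∂ℙ < 0 := by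
    have htend : Tendsto (fun n : ℕ => ∫ ω, max (X0 ω) (-(n : ℝ)) ∂ℙ) atTop
        (nhds (∫ ω, X0 ω ∂ℙ)) := by
      apply tendsto_integral_of_dominated_convergence (fun ω => |X0 ω|)
      · exact fun n => (hint.aemeasurable.sup_const (-(n:ℝ))).aestronglyMeasurable
      · exact hint.abs
      · intro n
        filter_upwards with ω
        simpa using habs (X0 ω) (n : ℝ) (Nat.cast_nonneg n)
      · filter_upwards with ω
        have hev : ∀ᶠ n : ℕ in atTop, max (X0 ω) (-(n : ℝ)) = X0 ω := by
          filter_upwards [eventually_ge_atTop ⌈-X0 ω⌉₊] with n hn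
          refine max_eq_left ?_
          have h1 : -X0 ω ≤ (⌈-X0 ω⌉₊ : ℝ) := Nat.le_ceil _
          have h2 : ((⌈-X0 ω⌉₊ : ℕ) : ℝ) ≤ (n : ℝ) := Nat.cast_le.mpr hn
          linarith
        exact Tendsto.congr' (by filter_upwards [hev] with n h using h.symm) tendsto_const_nhds
    have hev := htend.eventually_lt_const hdrift
    obtain ⟨n, hn1, hn2⟩ := ((eventually_ge_atTop 1).and hev).exists
    exact ⟨(n : ℝ), by exact_mod_cast hn1, hn2⟩
  have hc0 : (0 : ℝ) ≤ c := le_trans zero_le_one hc1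
  -- the truncated increments
  set Y : ℕ → Ω → ℝ := fun n ω => max (X n ω) (-c) with hYdef
  set Y0 : Ω → ℝ := fun ω => max (X0 ω) (-c) with hY0def
  have hYmeas : ∀ n, Measurable (Y n) := fun n => (hmeas n).max measurable_const
  have hYid : ∀ n, IdentDistrib (Y n) Y0 ℙ ℙ := fun n =>
    (hident n).comp (measurable_id.max measurable_const)
  have hY0int : Integrable Y0 ℙ := by
    refine hint.abs.mono' (hint.aemeasurable.sup_const (-c)).aestronglyMeasurable ?_
    filter_upwards with ω
    simpa using habs (X0 ω) c hc0
  have hYnint : ∀ n, Integrable (Y n) ℙ := fun n => (hYid n).integrable_iff.mpr hY0int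
  set m' : ℝ := ∫ ω, Y0 ω ∂ℙ with hm'def
  have hm'neg : m' < 0 := hcneg
  have hYint_eq : ∀ n, ∫ ω, Y n ω ∂ℙ = m' := fun n => (hYid n).integral_eq
  have hXY : ∀ n ω, X n ω ≤ Y n ω := fun n ω => le_max_left _ _
  have hYc : ∀ n ω, -c ≤ Y n ω := fun n ω => le_max_right _ _
  -- the "no exit yet" events for the truncated walk
  set G : ℕ → Set Ω := fun k => noExitSet Y x k with hGdef
  have hGmeas : ∀ k, MeasurableSet (G k) := fun k => measurableSet_noExitSet hYmeas x k
  -- pointwise bound on the stopped sums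
  have key : ∀ n : ℕ, ∀ ω : Ω,
      (∑ k ∈ Finset.range n, Set.indicator (G k) (fun ω' => -(Y k ω')) ω) ≤ x + c ∧
      (ω ∈ G n → (∑ k ∈ Finset.range n, Set.indicator (G k) (fun ω' => -(Y k ω')) ω) =
        -(partialSum Y n ω)) := by
    intro n ω
    induction n with
    | zero =>
      constructor
      · simp only [Finset.range_zero, Finset.sum_empty]
        linarith
      · intro _
        simp [partialSum_zero]
    | succ n ih =>
      rw [Finset.sum_range_succ]
      by_cases hωn : ω ∈ G n
      · have hfn := ih.2 hωn
        have hpos : 0 < x + partialSum Y n ω := pos_of_mem_noExitSet hx hωn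
        have hind : Set.indicator (G n) (fun ω' => -(Y n ω')) ω = -(Y n ω) :=
          Set.indicator_of_mem hωn _
        have hYcc := hYc n ω
        constructor
        · rw [hfn, hind]
          linarith
        · intro _
          rw [hfn, hind, partialSum_succ]
          ring
      · have hind0 : Set.indicator (G n) (fun ω' => -(Y n ω')) ω = 0 :=
          Set.indicator_of_notMem hωn _
        constructor
        · rw [hind0, add_zero]
          exact ih.1
        · intro hmem
          exact absurd (noExitSet_succ_subset Y x n hmem) hωn
  -- independence of the indicator of `G k` and `Y k`
  have hIndep : ∀ k : ℕ, IndepFun (Set.indicator (G k) (fun _ => (1 : ℝ))) (Y k) ℙ := by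
    intro k
    have h1 : IndepFun (fun ω (i : (Finset.range k : Finset ℕ)) => X i ω)
        (fun ω (i : ({k} : Finset ℕ)) => X i ω) ℙ :=
      hindep.indepFun_finset (Finset.range k) {k} (by simp) hmeas
    set B : Set ((i : (Finset.range k : Finset ℕ)) → ℝ) :=
      {v | ∀ m : ℕ, 1 ≤ m → m ≤ k →
        0 < x + ∑ i ∈ (Finset.range k).attach,
          if (i : ℕ) < m then max (v i) (-c) else 0} with hBdef
    have hsum : ∀ (ω : Ω) (m : ℕ), m ≤ k →
        (∑ i ∈ (Finset.range k).attach,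
          if (i : ℕ) < m then max (X (i : ℕ) ω) (-c) else 0) = partialSum Y m ω := by
      intro ω m hm
      rw [Finset.sum_attach (Finset.range k)
        (fun i => if i < m then max (X i ω) (-c) else 0)]
      rw [← Finset.sum_filter]
      have hfil : (Finset.range k).filter (· < m) = Finset.range m := by
        ext i
        simp only [Finset.mem_filter, Finset.mem_range]
        omega
      rw [hfil]
      rfl
    have hBmeas : MeasurableSet B := by
      have : B = ⋂ m ∈ Set.Icc 1 k,
          {v : (i : (Finset.range k : Finset ℕ)) → ℝ |
            0 < x + ∑ i ∈ (Finset.range k).attach,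
              if (i : ℕ) < m then max (v i) (-c) else 0} := by
        ext v
        simp [hBdef, Set.mem_Icc, and_imp]
      rw [this]
      refine MeasurableSet.biInter (Set.to_countable _) fun m _ => ?_
      refine measurableSet_lt measurable_const (measurable_const.add ?_)
      refine Finset.measurable_sum _ fun i _ => ?_
      split_ifs
      · exact (measurable_pi_apply i).max measurable_const
      · exact measurable_const
    have hφ : Measurable (Set.indicator B (fun _ => (1 : ℝ))) :=
      measurable_const.indicator hBmeas
    have hψ : Measurable (fun v : (i : ({k} : Finset ℕ)) → ℝ =>
        max (v ⟨k, Finset.mem_singleton_self k⟩) (-c)) :=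
      (measurable_pi_apply _).max measurable_const
    have h2 := h1.comp hφ hψ
    have hGeq : (Set.indicator B (fun _ => (1 : ℝ)) ∘
        (fun ω (i : (Finset.range k : Finset ℕ)) => X i ω)) =
        Set.indicator (G k) (fun _ => (1 : ℝ)) := by
      funext ω
      have hmemB : (fun i : (Finset.range k : Finset ℕ) => X i ω) ∈ B ↔ ω ∈ G k := by
        constructor
        · intro hB m h1m hmk
          have h' : 0 < x + ∑ i ∈ (Finset.range k).attach,
              if (i : ℕ) < m then max (X (i : ℕ) ω) (-c) else 0 := hB m h1m hmk
          rwa [hsum ω m hmk] at h'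
        · intro hG m h1m hmk
          show 0 < x + ∑ i ∈ (Finset.range k).attach,
            if (i : ℕ) < m then max (X (i : ℕ) ω) (-c) else 0
          rw [hsum ω m hmk]
          exact hG m h1m hmk
      by_cases hω : ω ∈ G k
      · simp only [Function.comp_apply]
        rw [Set.indicator_of_mem (hmemB.mpr hω), Set.indicator_of_mem hω]
      · simp only [Function.comp_apply]
        rw [Set.indicator_of_notMem (fun h => hω (hmemB.mp h)),
          Set.indicator_of_notMem hω]
    have hYeq : ((fun v : (i : ({k} : Finset ℕ)) → ℝ =>
        max (v ⟨k, Finset.mem_singleton_self k⟩) (-c)) ∘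
        (fun ω (i : ({k} : Finset ℕ)) => X i ω)) = Y k := by
      funext ω
      rfl
    rwa [hGeq, hYeq] at h2
  -- compute each term of the stopped-sum expectation
  have hterm : ∀ k : ℕ, ∫ ω, Set.indicator (G k) (fun ω' => -(Y k ω')) ω ∂ℙ =
      (ℙ (G k)).toReal * (-m') := by
    intro k
    have heq : (Set.indicator (G k) (fun ω' => -(Y k ω'))) =
        (Set.indicator (G k) (fun _ => (1 : ℝ))) * (fun ω => -(Y k ω)) := by
      funext ω
      rw [Pi.mul_apply]
      by_cases h : ω ∈ G k
      · rw [Set.indicator_of_mem h, Set.indicator_of_mem h, one_mul]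
      · rw [Set.indicator_of_notMem h, Set.indicator_of_notMem h, zero_mul]
    rw [heq]
    have hIndep' : IndepFun (Set.indicator (G k) (fun _ => (1 : ℝ)))
        (fun ω => -(Y k ω)) ℙ := by
      have := (hIndep k).comp measurable_id measurable_neg
      exact this
    have h3 := hIndep'.integral_mul_eq_mul_integral
      ((integrable_const (1 : ℝ)).indicator (hGmeas k)).aestronglyMeasurable ((hYnint k).neg).aestronglyMeasurable
    rw [integral_indicator_const (1 : ℝ) (hGmeas k), integral_neg, hYint_eq k] at h3
    rw [h3]
    simp [measureReal_def]
  -- the Wald-type bound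
  have hsum_bound : ∀ n : ℕ, (∑ k ∈ Finset.range n, (ℙ (G k)).toReal) * (-m') ≤ x + c := by
    intro n
    have hint_ind : ∀ k : ℕ, Integrable (Set.indicator (G k) (fun ω' => -(Y k ω'))) ℙ :=
      fun k => ((hYnint k).neg).indicator (hGmeas k)
    have hintsum : Integrable
        (fun ω => ∑ k ∈ Finset.range n, Set.indicator (G k) (fun ω' => -(Y k ω')) ω) ℙ :=
      integrable_finset_sum _ (fun k _ => hint_ind k)
    have h1 : ∫ ω, (∑ k ∈ Finset.range n, Set.indicator (G k) (fun ω' => -(Y k ω')) ω) ∂ℙ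
        ≤ x + c := by
      have := integral_mono hintsum (integrable_const (x + c)) (fun ω => (key n ω).1)
      simpa using this
    rw [integral_finset_sum _ (fun k _ => hint_ind k)] at h1
    calc (∑ k ∈ Finset.range n, (ℙ (G k)).toReal) * (-m')
        = ∑ k ∈ Finset.range n, (ℙ (G k)).toReal * (-m') := by rw [Finset.sum_mul]
      _ = ∑ k ∈ Finset.range n, ∫ ω, Set.indicator (G k) (fun ω' => -(Y k ω')) ω ∂ℙ :=
        Finset.sum_congr rfl (fun k _ => (hterm k).symm)
      _ ≤ x + c := h1
  have hxc : (0 : ℝ) < x + c := by linarith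
  have hbound : ∀ n : ℕ, ∑ k ∈ Finset.range n, ℙ (G k) ≤ ENNReal.ofReal ((x + c) / (-m')) := by
    intro n
    have hne : ∀ k ∈ Finset.range n, ℙ (G k) ≠ ⊤ := fun k _ => measure_ne_top _ _
    have h1 : (∑ k ∈ Finset.range n, ℙ (G k)).toReal =
        ∑ k ∈ Finset.range n, (ℙ (G k)).toReal := ENNReal.toReal_sum hne
    have h2 : ∑ k ∈ Finset.range n, (ℙ (G k)).toReal ≤ (x + c) / (-m') := by
      rw [le_div_iff₀ (by linarith : (0 : ℝ) < -m')]
      exact hsum_bound n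
    rw [← ENNReal.ofReal_toReal (a := ∑ k ∈ Finset.range n, ℙ (G k))
      (by exact (ENNReal.sum_lt_top.mpr (fun k hk => lt_top_iff_ne_top.mpr (hne k hk))).ne)]
    rw [h1]
    exact ENNReal.ofReal_le_ofReal h2
  have htsum : ∑' k : ℕ, ℙ (G k) ≤ ENNReal.ofReal ((x + c) / (-m')) :=
    ENNReal.summable.tsum_le_of_sum_range_le hbound
  -- rewrite the lintegral as a sum of tail probabilities
  set E : ℕ → Set Ω := fun k => noExitSet X x k with hEdef
  have hEmeas : ∀ k, MeasurableSet (E k) := fun k => measurableSet_noExitSet hmeas x k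
  have hEG : ∀ k, E k ⊆ G k := by
    intro k ω hω m h1 hm
    have hS : partialSum X m ω ≤ partialSum Y m ω :=
      Finset.sum_le_sum (fun i _ => hXY i ω)
    have := hω m h1 hm
    linarith
  have hptwise : ∀ ω : Ω, (exitTime X x ω : ℝ≥0∞) =
      ∑' k : ℕ, Set.indicator (E k) (fun _ => (1 : ℝ≥0∞)) ω := by
    intro ω
    rw [enat_cast_eq_tsum]
    refine tsum_congr fun k => ?_
    by_cases h : ω ∈ E k
    · rw [if_pos (lt_exitTime_iff.mpr h), Set.indicator_of_mem h]
    · rw [if_neg (fun hlt => h (lt_exitTime_iff.mp hlt)), Set.indicator_of_notMem h]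
  calc ∫⁻ ω, (exitTime X x ω : ℝ≥0∞) ∂ℙ
      = ∫⁻ ω, ∑' k : ℕ, Set.indicator (E k) (fun _ => (1 : ℝ≥0∞)) ω ∂ℙ := by
        exact lintegral_congr hptwise
    _ = ∑' k : ℕ, ∫⁻ ω, Set.indicator (E k) (fun _ => (1 : ℝ≥0∞)) ω ∂ℙ :=
        lintegral_tsum (fun k => (measurable_const.indicator (hEmeas k)).aemeasurable)
    _ = ∑' k : ℕ, ℙ (E k) := by
        refine tsum_congr fun k => ?_
        rw [lintegral_indicator_const (hEmeas k), one_mul]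
    _ ≤ ∑' k : ℕ, ℙ (G k) := ENNReal.tsum_le_tsum (fun k => measure_mono (hEG k))
    _ ≤ ENNReal.ofReal ((x + c) / (-m')) := htsum
    _ < ⊤ := ENNReal.ofReal_lt_top
end

section
/- Let X be a centered real random variable with E[X²] < ∞, X(n) i.i.d. copies, S(n) their partial sums, and τ_x = inf{n ≥ 1 : x + S(n) ≤ 0}. Define g₁(x) = E[(x + S(τ_x)); τ_x < ∞] and h₁(x) = x − g₁(x). Then h₁ is harmonic for the random walk killed when exiting (0,∞), i.e., h₁(x) = E[h₁(x + S(1)); τ_x > 1] for all x > 0. -/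
open MeasureTheory ProbabilityTheory Filter Set
open scoped ENNReal NNReal
open scoped Classical

namespace HOneAux

noncomputable def pS (n : ℕ) (u : ℕ → ℝ) : ℝ := ∑ i ∈ Finset.range n, u i

noncomputable def eT (x : ℝ) (u : ℕ → ℝ) : ℕ∞ :=
  sInf {n : ℕ∞ | ∃ m : ℕ, (m : ℕ∞) = n ∧ 1 ≤ m ∧ x + pS m u ≤ 0}

noncomputable def G (x : ℝ) (u : ℕ → ℝ) : ℝ :=
  Set.indicator {u | eT x u ≠ ⊤} (fun u => x + pS (eT x u).toNat u) u

lemma eT_eq (x : ℝ) (u : ℕ → ℝ) :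
    eT x u = if h : ∃ m : ℕ, 1 ≤ m ∧ x + pS m u ≤ 0
      then ((Nat.find h : ℕ) : ℕ∞) else ⊤ := by
  unfold eT
  split_ifs with h
  · refine le_antisymm (sInf_le ?_) ?_
    · simp only [Set.mem_setOf_eq]
      exact ⟨Nat.find h, rfl, (Nat.find_spec h).1, (Nat.find_spec h).2⟩
    refine le_sInf ?_
    rintro n ⟨m, rfl, hm1, hm2⟩
    exact_mod_cast Nat.find_le (h := h) ⟨hm1, hm2⟩
  · rw [sInf_eq_top]
    rintro n ⟨m, rfl, hm1, hm2⟩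
    exact absurd ⟨m, hm1, hm2⟩ h

lemma eT_ne_top_iff {x : ℝ} {u : ℕ → ℝ} :
    eT x u ≠ ⊤ ↔ ∃ m : ℕ, 1 ≤ m ∧ x + pS m u ≤ 0 := by
  rw [eT_eq]
  split_ifs with h
  · simpa using h
  · simpa using h

lemma G_eq (x : ℝ) (u : ℕ → ℝ) :
    G x u = if h : ∃ m : ℕ, 1 ≤ m ∧ x + pS m u ≤ 0
      then x + pS (Nat.find h) u else 0 := by
  unfold G
  split_ifs with h
  · rw [Set.indicator_of_mem (by simpa [Set.mem_setOf_eq, eT_ne_top_iff] using h)]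
    have : (eT x u).toNat = Nat.find h := by rw [eT_eq, dif_pos h]; simp
    rw [this]
  · rw [Set.indicator_of_notMem]
    simpa [Set.mem_setOf_eq, eT_ne_top_iff] using h

lemma pS_succ (m : ℕ) (u : ℕ → ℝ) : pS (m + 1) u = u 0 + pS m (fun i => u (i + 1)) := by
  simp only [pS, Finset.sum_range_succ']
  exact add_comm _ _

lemma pS_one (u : ℕ → ℝ) : pS 1 u = u 0 := by simp [pS]

lemma G_step (x : ℝ) (u : ℕ → ℝ) :
    G x u = if x + u 0 ≤ 0 then x + u 0 else G (x + u 0) (fun i => u (i + 1)) := by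
  split_ifs with h0
  · have h : ∃ m : ℕ, 1 ≤ m ∧ x + pS m u ≤ 0 := ⟨1, le_refl 1, by rwa [pS_one]⟩
    rw [G_eq, dif_pos h]
    have hf : Nat.find h = 1 := by
      rw [Nat.find_eq_iff]
      refine ⟨⟨le_refl 1, by rwa [pS_one]⟩, ?_⟩
      intro m hm
      interval_cases m
      simp
    rw [hf, pS_one]
  · push_neg at h0
    have key : ∀ m : ℕ, x + pS (m + 1) u = (x + u 0) + pS m (fun i => u (i + 1)) := by
      intro m; rw [pS_succ]; ring
    by_cases h' : ∃ m : ℕ, 1 ≤ m ∧ (x + u 0) + pS m (fun i => u (i + 1)) ≤ 0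
    · have h : ∃ m : ℕ, 1 ≤ m ∧ x + pS m u ≤ 0 := by
        obtain ⟨m, hm1, hm2⟩ := h'
        exact ⟨m + 1, Nat.succ_le_succ (Nat.zero_le m), by rw [key]; exact hm2⟩
      have hfind : Nat.find h = Nat.find h' + 1 := by
        rw [Nat.find_eq_iff]
        constructor
        · exact ⟨Nat.succ_le_succ (Nat.zero_le _), by rw [key]; exact (Nat.find_spec h').2⟩
        · rintro k hk ⟨hk1, hk2⟩
          match k, hk1 with
          | 1, _ =>
            rw [pS_one] at hk2
            exact absurd hk2 (not_le.mpr h0)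
          | (k' + 2), _ =>
            have hle : (x + u 0) + pS (k' + 1) (fun i => u (i + 1)) ≤ 0 := by
              rw [← key]; exact hk2
            exact Nat.find_min h' (by omega) ⟨Nat.succ_le_succ (Nat.zero_le _), hle⟩
      rw [G_eq, dif_pos h, G_eq, dif_pos h', hfind, key]
    · have h : ¬ ∃ m : ℕ, 1 ≤ m ∧ x + pS m u ≤ 0 := by
        rintro ⟨m, hm1, hm2⟩
        match m, hm1 with
        | 1, _ =>
          rw [pS_one] at hm2
          exact absurd hm2 (not_le.mpr h0)
        | (m' + 2), _ =>
          exact h' ⟨m' + 1, Nat.succ_le_succ (Nat.zero_le _), by rw [← key]; exact hm2⟩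
      rw [G_eq, dif_neg h, G_eq, dif_neg h']

lemma one_lt_eT_iff {x : ℝ} {u : ℕ → ℝ} : 1 < eT x u ↔ 0 < x + u 0 := by
  constructor
  · intro h
    by_contra hc
    push_neg at hc
    have h1 : eT x u ≤ 1 := sInf_le ⟨1, rfl, le_refl 1, by rwa [pS_one]⟩
    exact absurd (lt_of_lt_of_le h h1) (lt_irrefl _)
  · intro h
    refine lt_of_lt_of_le (by exact_mod_cast Nat.one_lt_two : (1 : ℕ∞) < 2) (le_sInf ?_)
    rintro n ⟨m, rfl, hm1, hm2⟩
    have hm2' : m ≠ 1 := by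
      rintro rfl
      rw [pS_one] at hm2
      exact absurd hm2 (not_le.mpr h)
    exact_mod_cast (by omega : 2 ≤ m)

noncomputable def Nf (x : ℝ) (u : ℕ → ℝ) : ℕ :=
  if h : ∃ m : ℕ, 1 ≤ m ∧ x + pS m u ≤ 0 then Nat.find h else 0

def A (m : ℕ) : Set (ℝ × (ℕ → ℝ)) := {p | 1 ≤ m ∧ p.1 + pS m p.2 ≤ 0}

def D : Set (ℝ × (ℕ → ℝ)) := {p | ∃ m : ℕ, 1 ≤ m ∧ p.1 + pS m p.2 ≤ 0}

lemma measurable_pS (n : ℕ) : Measurable (pS n) :=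
  Finset.measurable_sum _ (fun i _ => measurable_pi_apply i)

lemma measA (m : ℕ) : MeasurableSet (A m) := by
  by_cases hm : 1 ≤ m
  · have : A m = {p : ℝ × (ℕ → ℝ) | p.1 + pS m p.2 ≤ 0} := by
      ext p; simp [A, hm]
    rw [this]
    exact measurableSet_le (measurable_fst.add ((measurable_pS m).comp measurable_snd))
      measurable_const
  · have : A m = ∅ := by ext p; simp [A, hm]
    rw [this]; exact MeasurableSet.empty

lemma measD : MeasurableSet D := by
  have : D = ⋃ m : ℕ, A m := by ext p; simp [D, A]
  rw [this]
  exact MeasurableSet.iUnion measA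

lemma measurable_Nf : Measurable (fun p : ℝ × (ℕ → ℝ) => Nf p.1 p.2) := by
  apply measurable_to_countable'
  intro n
  rcases Nat.eq_zero_or_pos n with rfl | hn
  · have : (fun p : ℝ × (ℕ → ℝ) => Nf p.1 p.2) ⁻¹' {0} = Dᶜ := by
      ext p
      simp only [Set.mem_preimage, Set.mem_singleton_iff, Nf, Set.mem_compl_iff, D,
        Set.mem_setOf_eq]
      split_ifs with h
      · have h1 : 1 ≤ Nat.find h := (Nat.find_spec h).1
        constructor
        · intro h0; omega
        · intro h0; exact absurd h h0
      · simp [h]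
    rw [this]
    exact measD.compl
  · have : (fun p : ℝ × (ℕ → ℝ) => Nf p.1 p.2) ⁻¹' {n} =
        A n ∩ ⋂ k : ℕ, ⋂ _ : k < n, (A k)ᶜ := by
      ext p
      simp only [Set.mem_preimage, Set.mem_singleton_iff, Nf, Set.mem_inter_iff, Set.mem_iInter,
        Set.mem_compl_iff, A, Set.mem_setOf_eq]
      split_ifs with h
      · rw [Nat.find_eq_iff]
      · constructor
        · intro h0; omega
        · rintro ⟨h1, _⟩
          exact absurd ⟨n, h1⟩ h
    rw [this]
    exact (measA n).inter (MeasurableSet.iInter fun k => MeasurableSet.iInter fun _ =>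
      (measA k).compl)

lemma G_eq_indicator : (fun p : ℝ × (ℕ → ℝ) => G p.1 p.2) =
    Set.indicator D (fun p => p.1 + pS (Nf p.1 p.2) p.2) := by
  funext p
  rw [G_eq]
  by_cases h : ∃ m : ℕ, 1 ≤ m ∧ p.1 + pS m p.2 ≤ 0
  · rw [dif_pos h, Set.indicator_of_mem (show p ∈ D from h)]
    simp only [Nf, dif_pos h]
  · rw [dif_neg h, Set.indicator_of_notMem (show p ∉ D from h)]

lemma measurable_G2 : Measurable (fun p : ℝ × (ℕ → ℝ) => G p.1 p.2) := by
  rw [G_eq_indicator]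
  refine Measurable.indicator ?_ measD
  have h1 : Measurable (fun q : (ℝ × (ℕ → ℝ)) × ℕ => q.1.1 + pS q.2 q.1.2) :=
    measurable_from_prod_countable_left fun n =>
      (measurable_fst.add ((measurable_pS n).comp measurable_snd))
  exact h1.comp (measurable_id.prodMk measurable_Nf)

lemma measurable_G1 (x : ℝ) : Measurable (G x) :=
  measurable_G2.comp (measurable_const.prodMk measurable_id)

section Laws

variable {Ω : Type*} [MeasureSpace Ω] [IsProbabilityMeasure (ℙ : Measure Ω)]
variable (X : ℕ → Ω → ℝ) (X0 : Ω → ℝ)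

lemma law_tuple (hmeas : ∀ n, Measurable (X n))
    (hindep : iIndepFun X ℙ)
    (hident : ∀ n, IdentDistrib (X n) X0 ℙ ℙ)
    (s : Finset ℕ) (k : ℕ → ℕ) (hk : Function.Injective k) :
    Measure.map (fun ω (i : s) => X (k i) ω) ℙ
      = Measure.pi (fun _ : s => Measure.map X0 ℙ) := by
  have hXk : Measurable (fun ω (i : s) => X (k i) ω) :=
    measurable_pi_lambda _ fun i => hmeas (k i)
  haveI : IsProbabilityMeasure (Measure.map X0 ℙ) :=
    Measure.isProbabilityMeasure_map (hident 0).aemeasurable_snd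
  refine (Measure.pi_eq fun A hA => ?_).symm
  rw [Measure.map_apply hXk (MeasurableSet.univ_pi hA)]
  set B : ℕ → Set ℝ := fun j => ⋂ (i : s) (_ : k i = j), A i with hB
  have hBk : ∀ i : s, B (k i) = A i := by
    intro i
    apply Set.eq_of_subset_of_subset
    · intro a ha
      simp only [hB, Set.mem_iInter] at ha
      exact ha i rfl
    · intro a ha
      simp only [hB, Set.mem_iInter]
      intro i' hi'
      have : (i' : ℕ) = i := hk hi'
      have : i' = i := Subtype.ext this
      rw [this]
      exact ha
  have hBmeas : ∀ j, MeasurableSet (B j) :=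
    fun j => MeasurableSet.iInter fun i => MeasurableSet.iInter fun _ => hA i
  have hpre : (fun ω (i : s) => X (k i) ω) ⁻¹' Set.pi Set.univ A
      = ⋂ j ∈ s.image k, X j ⁻¹' B j := by
    ext ω
    simp only [Set.mem_preimage, Set.mem_pi, Set.mem_univ, forall_true_left, Set.mem_iInter,
      Finset.mem_image]
    constructor
    · rintro hω j ⟨i, hi, rfl⟩
      simp only [hB, Set.mem_preimage, Set.mem_iInter]
      intro i' hi'
      have : i' = (⟨i, hi⟩ : s) := Subtype.ext (hk hi')
      rw [this]
      exact hω ⟨i, hi⟩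
    · intro hω i
      have := hω (k i) ⟨i, i.2, rfl⟩
      rw [hBk i] at this
      exact this
  have hmarg : ∀ i : s, ℙ (X (k i) ⁻¹' B (k i)) = Measure.map X0 ℙ (A i) := by
    intro i
    rw [hBk i, ← (hident (k i)).map_eq, Measure.map_apply (hmeas (k i)) (hA i)]
  rw [hpre, hindep.measure_inter_preimage_eq_mul (s.image k) (fun j hj => hBmeas j),
    Finset.prod_image (fun a _ b _ hab => hk hab),
    ← Finset.prod_attach s (fun j => ℙ (X (k j) ⁻¹' B (k j))), ← Finset.univ_eq_attach]
  exact Finset.prod_congr rfl fun i _ => hmarg i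

lemma law_shift (hmeas : ∀ n, Measurable (X n))
    (hindep : iIndepFun X ℙ)
    (hident : ∀ n, IdentDistrib (X n) X0 ℙ ℙ) :
    Measure.map (fun ω (i : ℕ) => X (i + 1) ω) ℙ = Measure.map (fun ω (i : ℕ) => X i ω) ℙ := by
  have hT : Measurable (fun ω (i : ℕ) => X (i + 1) ω) :=
    measurable_pi_lambda _ fun i => hmeas (i + 1)
  have hφ : Measurable (fun ω (i : ℕ) => X i ω) :=
    measurable_pi_lambda _ fun i => hmeas i
  haveI h1 : IsProbabilityMeasure (Measure.map (fun ω (i : ℕ) => X (i + 1) ω) ℙ) :=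
    Measure.isProbabilityMeasure_map hT.aemeasurable
  refine ext_of_generate_finite (measurableCylinders (fun _ : ℕ => ℝ))
    generateFrom_measurableCylinders.symm isPiSystem_measurableCylinders (fun t ht => ?_) ?_
  · obtain ⟨s, S, hS, rfl⟩ := (mem_measurableCylinders _).mp ht
    have hres : Measurable (s.restrict : (ℕ → ℝ) → (s → ℝ)) :=
      measurable_pi_lambda _ fun i => measurable_pi_apply _
    have hcyl : MeasurableSet (cylinder s S) := hres hS
    rw [Measure.map_apply hT hcyl, Measure.map_apply hφ hcyl]
    have e1 : (fun ω (i : ℕ) => X (i + 1) ω) ⁻¹' (cylinder s S)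
        = (fun ω (i : s) => X ((i : ℕ) + 1) ω) ⁻¹' S := rfl
    have e2 : (fun ω (i : ℕ) => X i ω) ⁻¹' (cylinder s S)
        = (fun ω (i : s) => X (i : ℕ) ω) ⁻¹' S := rfl
    rw [e1, e2]
    have hm1 : Measurable (fun ω (i : s) => X ((i : ℕ) + 1) ω) :=
      measurable_pi_lambda _ fun i => hmeas _
    have hm2 : Measurable (fun ω (i : s) => X (i : ℕ) ω) :=
      measurable_pi_lambda _ fun i => hmeas _
    rw [← Measure.map_apply hm1 hS, ← Measure.map_apply hm2 hS]
    have ht1 := law_tuple X X0 hmeas hindep hident s (fun n => n + 1) (fun a b h => by simpa using h)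
    have ht2 := law_tuple X X0 hmeas hindep hident s (fun n => n) (fun a b h => h)
    beta_reduce at ht1 ht2
    rw [ht1, ht2]
  · haveI h2 : IsProbabilityMeasure (Measure.map (fun ω (i : ℕ) => X i ω) ℙ) :=
      Measure.isProbabilityMeasure_map hφ.aemeasurable
    haveI h3 : IsProbabilityMeasure (Measure.map (fun ω (i : ℕ) => X (i + 1) ω) ℙ) :=
      Measure.isProbabilityMeasure_map hT.aemeasurable
    simp [measure_univ]

lemma indep_head_tail (hmeas : ∀ n, Measurable (X n))
    (hindep : iIndepFun X ℙ) :
    IndepFun (X 0) (fun ω (i : ℕ) => X (i + 1) ω) ℙ := by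
  have h := indep_biSup_compl (fun n => (hmeas n).comap_le) hindep.iIndep ({0} : Set ℕ)
  show Indep (MeasurableSpace.comap (X 0) inferInstance)
    (MeasurableSpace.comap (fun ω (i : ℕ) => X (i + 1) ω) inferInstance) ℙ
  refine indep_of_indep_of_le_left (indep_of_indep_of_le_right h ?_) ?_
  · -- comap of the tail function is below the sup over nonzero indices
    have hpi : (inferInstance : MeasurableSpace (ℕ → ℝ)) =
        ⨆ i : ℕ, MeasurableSpace.comap (fun u : ℕ → ℝ => u i) inferInstance := rfl
    rw [hpi, MeasurableSpace.comap_iSup]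
    refine iSup_le fun i => ?_
    rw [MeasurableSpace.comap_comp]
    exact le_trans (le_of_eq rfl)
      (le_biSup (fun n => MeasurableSpace.comap (X n) inferInstance)
        (by simp : (i + 1) ∈ ({0} : Set ℕ)ᶜ))
  · exact le_biSup (fun n => MeasurableSpace.comap (X n) inferInstance)
      (by simp : (0 : ℕ) ∈ ({0} : Set ℕ))

end Laws

end HOneAux


/-- `g₁(x) = E[(x + S(τ_x)); τ_x < ∞]`. -/
noncomputable def gOne {Ω : Type*} [MeasureSpace Ω] (X : ℕ → Ω → ℝ) (x : ℝ) : ℝ :=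
  ∫ ω, Set.indicator {ω | exitTime X x ω ≠ ⊤}
    (fun ω => x + partialSum X (exitTime X x ω).toNat ω) ω ∂ℙ

/-- `h₁(x) = x − g₁(x)`. -/
noncomputable def hOne {Ω : Type*} [MeasureSpace Ω] (X : ℕ → Ω → ℝ) (x : ℝ) : ℝ :=
  x - gOne X x

/-- `h₁` is harmonic for the random walk killed when exiting `(0,∞)`:
`h₁(x) = E[h₁(x + S(1)); τ_x > 1]` for all `x > 0`. -/
theorem hOne_harmonic
    {Ω : Type*} [MeasureSpace Ω] [IsProbabilityMeasure (ℙ : Measure Ω)]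
    (X : ℕ → Ω → ℝ) (X0 : Ω → ℝ)
    (hmeas : ∀ n, Measurable (X n))
    (hindep : iIndepFun X ℙ)
    (hident : ∀ n, IdentDistrib (X n) X0 ℙ ℙ)
    (hsq : Integrable (fun ω => X0 ω ^ 2) ℙ)
    (hcent : ∫ ω, X0 ω ∂ℙ = 0)
    (hg1 : ∀ x : ℝ, 0 < x → Integrable (Set.indicator {ω | exitTime X x ω ≠ ⊤}
      (fun ω => x + partialSum X (exitTime X x ω).toNat ω)) ℙ)
    (x : ℝ) (hx : 0 < x) :
    hOne X x =
      ∫ ω, Set.indicator {ω | 1 < exitTime X x ω}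
        (fun ω => hOne X (x + partialSum X 1 ω)) ω ∂ℙ := by
  classical
  have hφm : Measurable (fun ω (i : ℕ) => X i ω) := measurable_pi_lambda _ fun i => hmeas i
  have hTm : Measurable (fun ω (i : ℕ) => X (i + 1) ω) :=
    measurable_pi_lambda _ fun i => hmeas (i + 1)
  set ν : Measure (ℕ → ℝ) := Measure.map (fun ω (i : ℕ) => X i ω) ℙ with hν
  have hνT : Measure.map (fun ω (i : ℕ) => X (i + 1) ω) ℙ = ν :=
    HOneAux.law_shift X X0 hmeas hindep hident
  haveI : IsProbabilityMeasure ν := Measure.isProbabilityMeasure_map hφm.aemeasurable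
  -- correspondence between Ω-level and path-level objects
  have hind_eq : ∀ y : ℝ, (Set.indicator {ω | exitTime X y ω ≠ ⊤}
      (fun ω => y + partialSum X (exitTime X y ω).toNat ω))
      = fun ω => HOneAux.G y (fun i => X i ω) := by
    intro y; funext ω; rfl
  have hgOne_eq : ∀ y : ℝ, gOne X y = ∫ u, HOneAux.G y u ∂ν := by
    intro y
    rw [gOne, hind_eq y, hν,
      integral_map hφm.aemeasurable (HOneAux.measurable_G1 y).aestronglyMeasurable]
  -- integrability of X 0
  have hX0aesm : AEStronglyMeasurable X0 ℙ := (hident 0).aemeasurable_snd.aestronglyMeasurable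
  have hX0int : Integrable X0 ℙ := by
    refine Integrable.mono' ((integrable_const (1 : ℝ)).add hsq) hX0aesm ?_
    filter_upwards with ω
    have h1 : |X0 ω| ≤ 1 + X0 ω ^ 2 := by nlinarith [abs_nonneg (X0 ω), sq_abs (X0 ω)]
    simpa [Real.norm_eq_abs] using h1
  have hXint : Integrable (X 0) ℙ := (hident 0).integrable_iff.mpr hX0int
  have hYm : Measurable (fun ω => x + X 0 ω) := measurable_const.add (hmeas 0)
  have hYint : Integrable (fun ω => x + X 0 ω) ℙ := (integrable_const x).add hXint
  have hEY : ∫ ω, x + X 0 ω ∂ℙ = x := by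
    rw [integral_add (integrable_const x) hXint, integral_const, (hident 0).integral_eq, hcent]
    simp [measure_univ]
  -- measurable sets
  have hs1 : MeasurableSet {ω : Ω | x + X 0 ω ≤ 0} := measurableSet_le hYm measurable_const
  have hs2 : MeasurableSet {ω : Ω | 0 < x + X 0 ω} := measurableSet_lt measurable_const hYm
  -- decomposition functions
  set f1 : Ω → ℝ := Set.indicator {ω : Ω | x + X 0 ω ≤ 0} (fun ω => x + X 0 ω) with hf1def
  set fpos : Ω → ℝ := Set.indicator {ω : Ω | 0 < x + X 0 ω} (fun ω => x + X 0 ω) with hfposdef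
  set f2 : Ω → ℝ := Set.indicator {ω : Ω | 0 < x + X 0 ω}
    (fun ω => HOneAux.G (x + X 0 ω) (fun i => X (i + 1) ω)) with hf2def
  have hstep : ∀ ω, HOneAux.G x (fun i => X i ω) = f1 ω + f2 ω := by
    intro ω
    have h0 : HOneAux.G x (fun i => X i ω)
        = if x + X 0 ω ≤ 0 then x + X 0 ω
          else HOneAux.G (x + X 0 ω) (fun i => X (i + 1) ω) :=
      HOneAux.G_step x (fun i => X i ω)
    rw [h0, hf1def, hf2def]
    by_cases h : x + X 0 ω ≤ 0
    · rw [if_pos h, Set.indicator_of_mem (show ω ∈ {ω : Ω | x + X 0 ω ≤ 0} from h),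
        Set.indicator_of_notMem (show ω ∉ {ω : Ω | 0 < x + X 0 ω} from not_lt.mpr h), add_zero]
    · rw [if_neg h, Set.indicator_of_notMem (show ω ∉ {ω : Ω | x + X 0 ω ≤ 0} from h),
        Set.indicator_of_mem (show ω ∈ {ω : Ω | 0 < x + X 0 ω} from not_le.mp h), zero_add]
  -- integrability
  have hGint : Integrable (fun ω => HOneAux.G x (fun i => X i ω)) ℙ := by
    have h := hg1 x hx
    rwa [hind_eq x] at h
  have hf1int : Integrable f1 ℙ := hYint.indicator hs1
  have hposint : Integrable fpos ℙ := hYint.indicator hs2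
  have hf2int : Integrable f2 ℙ := by
    have h : f2 = fun ω => HOneAux.G x (fun i => X i ω) - f1 ω := by
      funext ω
      have := hstep ω
      linarith [hstep ω]
    rw [h]
    exact hGint.sub hf1int
  -- product structure
  set Z : Ω → ℝ × (ℕ → ℝ) := fun ω => (x + X 0 ω, fun i => X (i + 1) ω) with hZdef
  have hZm : Measurable Z := hYm.prodMk hTm
  set H : ℝ × (ℕ → ℝ) → ℝ := Set.indicator {p : ℝ × (ℕ → ℝ) | 0 < p.1}
    (fun p => HOneAux.G p.1 p.2) with hHdef
  have hHm : Measurable H :=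
    HOneAux.measurable_G2.indicator (measurableSet_lt measurable_const measurable_fst)
  have hHZ : ∀ ω, H (Z ω) = f2 ω := by
    intro ω
    rw [hHdef, hf2def]
    by_cases h : 0 < x + X 0 ω
    · rw [Set.indicator_of_mem (show Z ω ∈ {p : ℝ × (ℕ → ℝ) | 0 < p.1} from h),
        Set.indicator_of_mem (show ω ∈ {ω : Ω | 0 < x + X 0 ω} from h)]
    · rw [Set.indicator_of_notMem (show Z ω ∉ {p : ℝ × (ℕ → ℝ) | 0 < p.1} from h),
        Set.indicator_of_notMem (show ω ∉ {ω : Ω | 0 < x + X 0 ω} from h)]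
  have hindepYT : IndepFun (fun ω => x + X 0 ω) (fun ω (i : ℕ) => X (i + 1) ω) ℙ := by
    have h0 := HOneAux.indep_head_tail X hmeas hindep
    exact h0.comp (measurable_const.add measurable_id) measurable_id
  have hprod : Measure.map Z ℙ = (Measure.map (fun ω => x + X 0 ω) ℙ).prod ν := by
    rw [← hνT]
    exact (indepFun_iff_map_prod_eq_prod_map_map hYm.aemeasurable hTm.aemeasurable).mp hindepYT
  have hHprod_int : Integrable H ((Measure.map (fun ω => x + X 0 ω) ℙ).prod ν) := by
    rw [← hprod]
    refine (integrable_map_measure hHm.aestronglyMeasurable hZm.aemeasurable).mpr ?_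
    have h : H ∘ Z = f2 := funext hHZ
    rw [h]
    exact hf2int
  -- inner integral
  set W : ℝ → ℝ := Set.indicator {y : ℝ | 0 < y} (fun y => ∫ u, HOneAux.G y u ∂ν) with hWdef
  have hinner : ∀ y : ℝ, ∫ u, H (y, u) ∂ν = W y := by
    intro y
    rw [hWdef]
    by_cases hy : 0 < y
    · rw [Set.indicator_of_mem (show y ∈ {y : ℝ | 0 < y} from hy)]
      refine integral_congr_ae (Filter.Eventually.of_forall fun u => ?_)
      beta_reduce
      rw [hHdef, Set.indicator_of_mem (show (y, u) ∈ {p : ℝ × (ℕ → ℝ) | 0 < p.1} from hy)]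
    · rw [Set.indicator_of_notMem (show y ∉ {y : ℝ | 0 < y} from hy)]
      have h0 : ∀ u, H (y, u) = 0 := fun u =>
        Set.indicator_of_notMem (show (y, u) ∉ {p : ℝ × (ℕ → ℝ) | 0 < p.1} from hy) _
      simp only [h0, integral_zero]
  have hWm : Measurable W := by
    rw [hWdef]
    exact (HOneAux.measurable_G2.stronglyMeasurable.integral_prod_right'.measurable).indicator
      (measurableSet_lt measurable_const measurable_id)
  have hWint : Integrable W (Measure.map (fun ω => x + X 0 ω) ℙ) := by
    have h := hHprod_int.integral_prod_left
    rwa [show (fun y => ∫ u, H (y, u) ∂ν) = W from funext hinner] at h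
  have hW'int : Integrable (fun ω => W (x + X 0 ω)) ℙ :=
    (integrable_map_measure hWm.aestronglyMeasurable hYm.aemeasurable).mp hWint
  have hW_eq : ∀ ω, W (x + X 0 ω)
      = Set.indicator {ω : Ω | 0 < x + X 0 ω} (fun ω => gOne X (x + X 0 ω)) ω := by
    intro ω
    rw [hWdef]
    by_cases h : 0 < x + X 0 ω
    · rw [Set.indicator_of_mem (show (x + X 0 ω) ∈ {y : ℝ | 0 < y} from h),
        Set.indicator_of_mem (show ω ∈ {ω : Ω | 0 < x + X 0 ω} from h), hgOne_eq]
    · rw [Set.indicator_of_notMem (show (x + X 0 ω) ∉ {y : ℝ | 0 < y} from h),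
        Set.indicator_of_notMem (show ω ∉ {ω : Ω | 0 < x + X 0 ω} from h)]
  have hgInd_int : Integrable
      (fun ω => Set.indicator {ω : Ω | 0 < x + X 0 ω} (fun ω => gOne X (x + X 0 ω)) ω) ℙ := by
    rwa [show (fun ω => W (x + X 0 ω))
      = fun ω => Set.indicator {ω : Ω | 0 < x + X 0 ω} (fun ω => gOne X (x + X 0 ω)) ω
      from funext hW_eq] at hW'int
  -- value of ∫ f2
  have hf2val : ∫ ω, f2 ω ∂ℙ
      = ∫ ω, Set.indicator {ω : Ω | 0 < x + X 0 ω} (fun ω => gOne X (x + X 0 ω)) ω ∂ℙ := by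
    have e1 : ∫ p, H p ∂(Measure.map Z ℙ) = ∫ ω, f2 ω ∂ℙ := by
      rw [integral_map hZm.aemeasurable hHm.aestronglyMeasurable]
      exact integral_congr_ae (Filter.Eventually.of_forall hHZ)
    have e2 : ∫ p, H p ∂((Measure.map (fun ω => x + X 0 ω) ℙ).prod ν)
        = ∫ y, ∫ u, H (y, u) ∂ν ∂(Measure.map (fun ω => x + X 0 ω) ℙ) :=
      integral_prod H hHprod_int
    have e3 : ∫ y, W y ∂(Measure.map (fun ω => x + X 0 ω) ℙ) = ∫ ω, W (x + X 0 ω) ∂ℙ :=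
      integral_map hYm.aemeasurable hWm.aestronglyMeasurable
    calc ∫ ω, f2 ω ∂ℙ = ∫ p, H p ∂(Measure.map Z ℙ) := e1.symm
      _ = ∫ y, ∫ u, H (y, u) ∂ν ∂(Measure.map (fun ω => x + X 0 ω) ℙ) := by rw [hprod, e2]
      _ = ∫ y, W y ∂(Measure.map (fun ω => x + X 0 ω) ℙ) := by
          exact integral_congr_ae (Filter.Eventually.of_forall hinner)
      _ = ∫ ω, W (x + X 0 ω) ∂ℙ := e3
      _ = _ := integral_congr_ae (Filter.Eventually.of_forall hW_eq)
  -- splitting gOne and x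
  have hsplit : gOne X x = (∫ ω, f1 ω ∂ℙ) + ∫ ω, f2 ω ∂ℙ := by
    rw [gOne, hind_eq x,
      show (fun ω => HOneAux.G x (fun i => X i ω)) = fun ω => f1 ω + f2 ω from funext hstep]
    exact integral_add hf1int hf2int
  have hxsplit : (∫ ω, f1 ω ∂ℙ) + (∫ ω, fpos ω ∂ℙ) = x := by
    rw [← integral_add hf1int hposint, ← hEY]
    refine integral_congr_ae (Filter.Eventually.of_forall fun ω => ?_)
    beta_reduce
    rw [hf1def, hfposdef]
    by_cases h : x + X 0 ω ≤ 0
    · rw [Set.indicator_of_mem (show ω ∈ {ω : Ω | x + X 0 ω ≤ 0} from h),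
        Set.indicator_of_notMem (show ω ∉ {ω : Ω | 0 < x + X 0 ω} from not_lt.mpr h), add_zero]
    · rw [Set.indicator_of_notMem (show ω ∉ {ω : Ω | x + X 0 ω ≤ 0} from h),
        Set.indicator_of_mem (show ω ∈ {ω : Ω | 0 < x + X 0 ω} from not_le.mp h), zero_add]
  -- rewrite the RHS of the goal
  have hRHS : (fun ω => Set.indicator {ω : Ω | 1 < exitTime X x ω}
      (fun ω => hOne X (x + partialSum X 1 ω)) ω)
      = fun ω => Set.indicator {ω : Ω | 0 < x + X 0 ω} (fun ω => hOne X (x + X 0 ω)) ω := by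
    funext ω
    have hset : (1 < exitTime X x ω) ↔ (0 < x + X 0 ω) :=
      HOneAux.one_lt_eT_iff (x := x) (u := fun i => X i ω)
    have hps1 : partialSum X 1 ω = X 0 ω := by simp [partialSum]
    by_cases h : 0 < x + X 0 ω
    · rw [Set.indicator_of_mem (show ω ∈ {ω : Ω | 1 < exitTime X x ω} from hset.mpr h),
        Set.indicator_of_mem (show ω ∈ {ω : Ω | 0 < x + X 0 ω} from h), hps1]
    · rw [Set.indicator_of_notMem
          (show ω ∉ {ω : Ω | 1 < exitTime X x ω} from fun hc => h (hset.mp hc)),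
        Set.indicator_of_notMem (show ω ∉ {ω : Ω | 0 < x + X 0 ω} from h)]
  have hfinal : ∫ ω, Set.indicator {ω : Ω | 0 < x + X 0 ω} (fun ω => hOne X (x + X 0 ω)) ω ∂ℙ
      = (∫ ω, fpos ω ∂ℙ)
        - ∫ ω, Set.indicator {ω : Ω | 0 < x + X 0 ω} (fun ω => gOne X (x + X 0 ω)) ω ∂ℙ := by
    rw [← integral_sub hposint hgInd_int]
    refine integral_congr_ae (Filter.Eventually.of_forall fun ω => ?_)
    beta_reduce
    rw [hfposdef]
    by_cases h : 0 < x + X 0 ω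
    · rw [Set.indicator_of_mem (show ω ∈ {ω : Ω | 0 < x + X 0 ω} from h),
        Set.indicator_of_mem (show ω ∈ {ω : Ω | 0 < x + X 0 ω} from h),
        Set.indicator_of_mem (show ω ∈ {ω : Ω | 0 < x + X 0 ω} from h)]
      rfl
    · rw [Set.indicator_of_notMem (show ω ∉ {ω : Ω | 0 < x + X 0 ω} from h),
        Set.indicator_of_notMem (show ω ∉ {ω : Ω | 0 < x + X 0 ω} from h),
        Set.indicator_of_notMem (show ω ∉ {ω : Ω | 0 < x + X 0 ω} from h), sub_zero]
  show x - gOne X x = _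
  rw [hRHS, hfinal]
  rw [hsplit, hf2val]
  linarith [hxsplit]
end

section
/- Let X be centered with E[X²] < ∞, S(n) the random walk, and (ℓ_k) the strictly descending ladder epochs of S (ℓ₀ = 0, ℓ_k = min{n : S(n) < S(ℓ_{k-1})}). For x > 0 let U(x) = Σ_{k≥0} P[S(ℓ_k) ∈ (−x, 0]] (the potential kernel, which is finite). Then for each m > 0, t > 0 and 0 < x ≤ m: P[x + S(τ_x) < −t] ≤ U(m)·P[S(ℓ₁) < −t]. -/
open MeasureTheory ProbabilityTheory Filter Set
open scoped ENNReal NNReal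

/-- Strictly descending ladder epochs: `ℓ₀ = 0`, `ℓ_{k+1} = inf {n : S(n) < S(ℓ_k)}`. -/
noncomputable def ladderEpoch {Ω : Type*} (X : ℕ → Ω → ℝ) : ℕ → Ω → ℕ
  | 0 => fun _ => 0
  | k + 1 => fun ω => sInf {n : ℕ | partialSum X n ω < partialSum X (ladderEpoch X k ω) ω}

/-- The potential kernel `U(x) = Σ_{k≥0} P[S(ℓ_k) ∈ (−x, 0]]`. -/
noncomputable def potentialU {Ω : Type*} [MeasureSpace Ω] (X : ℕ → Ω → ℝ) (x : ℝ) : ℝ≥0∞ :=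
  ∑' k : ℕ, ℙ {ω | partialSum X (ladderEpoch X k ω) ω ∈ Set.Ioc (-x) 0}

namespace OvershootTail

/-- Coordinate process on sequence space. -/
abbrev cf : ℕ → (ℕ → ℝ) → ℝ := fun i u => u i

variable {Ω : Type*}

lemma pS_zero (X : ℕ → Ω → ℝ) (ω : Ω) : partialSum X 0 ω = 0 := by
  simp [partialSum]

lemma ladder_zero (X : ℕ → Ω → ℝ) (ω : Ω) : ladderEpoch X 0 ω = 0 := rfl

lemma ladder_succ (X : ℕ → Ω → ℝ) (ω : Ω) (k : ℕ) :
    ladderEpoch X (k + 1) ω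
      = sInf {n : ℕ | partialSum X n ω < partialSum X (ladderEpoch X k ω) ω} := rfl

/-- `Chain X ω k` : the first `k` ladder steps are genuine strict descents. -/
def Chain (X : ℕ → Ω → ℝ) (ω : Ω) (k : ℕ) : Prop :=
  ∀ i < k, partialSum X (ladderEpoch X (i + 1) ω) ω < partialSum X (ladderEpoch X i ω) ω

lemma Chain.mono {X : ℕ → Ω → ℝ} {ω : Ω} {k k' : ℕ} (h : Chain X ω k) (hk : k' ≤ k) :
    Chain X ω k' := fun i hi => h i (lt_of_lt_of_le hi hk)

lemma nat_sInf_eq {T : Set ℕ} {m : ℕ} (h₁ : m ∈ T) (h₂ : ∀ p < m, p ∉ T) : sInf T = m := by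
  rcases lt_or_ge (sInf T) m with h | h
  · exact absurd (Nat.sInf_mem ⟨m, h₁⟩) (h₂ _ h)
  · exact le_antisymm (Nat.sInf_le h₁) h

lemma ladder_min (X : ℕ → Ω → ℝ) (ω : Ω) :
    ∀ k, Chain X ω k → ∀ p ≤ ladderEpoch X k ω,
      partialSum X (ladderEpoch X k ω) ω ≤ partialSum X p ω := by
  intro k
  induction k with
  | zero =>
    intro _ p hp
    rw [ladder_zero] at hp
    rw [Nat.le_zero.mp hp, ladder_zero]
  | succ k ih =>
    intro hc p hp
    have hkk := hc k (Nat.lt_succ_self k)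
    rcases eq_or_lt_of_le hp with h | h
    · rw [h]
    · rw [ladder_succ] at h
      have hnm := Nat.notMem_of_lt_sInf h
      simp only [Set.mem_setOf_eq, not_lt] at hnm
      rw [← ladder_succ] at *
      linarith

lemma ladder_lt (X : ℕ → Ω → ℝ) (ω : Ω) (k : ℕ) (hc : Chain X ω (k + 1)) :
    ladderEpoch X k ω < ladderEpoch X (k + 1) ω := by
  by_contra h
  push_neg at h
  have := ladder_min X ω k (hc.mono (Nat.le_succ k)) _ h
  linarith [hc k (Nat.lt_succ_self k)]

lemma ladder_ge (X : ℕ → Ω → ℝ) (ω : Ω) :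
    ∀ k, Chain X ω k → k ≤ ladderEpoch X k ω := by
  intro k
  induction k with
  | zero => intro _; exact Nat.zero_le _
  | succ k ih =>
    intro hc
    have h1 := ih (hc.mono (Nat.le_succ k))
    have h2 := ladder_lt X ω k hc
    omega

lemma ladder_nonpos (X : ℕ → Ω → ℝ) (ω : Ω) (k : ℕ) (hc : Chain X ω k) :
    partialSum X (ladderEpoch X k ω) ω ≤ 0 := by
  have := ladder_min X ω k hc 0 (Nat.zero_le _)
  rwa [pS_zero] at this

/-- The exit position is a ladder epoch: pathwise decomposition. -/
lemma exists_chain (X : ℕ → Ω → ℝ) (ω : Ω) {x : ℝ} (hx : 0 < x) {n : ℕ} (hn1 : 1 ≤ n)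
    (hSn : partialSum X n ω ≤ -x) (hmin : ∀ p < n, -x < partialSum X p ω) :
    ∃ k, Chain X ω (k + 1) ∧ ladderEpoch X (k + 1) ω = n := by
  classical
  set G : Set ℕ := {k | Chain X ω k ∧ ladderEpoch X k ω < n} with hGdef
  have h0 : 0 ∈ G := by
    refine ⟨fun i hi => absurd hi (Nat.not_lt_zero i), ?_⟩
    rw [ladder_zero]; omega
  have hGne : G.Nonempty := ⟨0, h0⟩
  have hbdd : BddAbove G := by
    refine ⟨n, fun k hk => ?_⟩
    have := ladder_ge X ω k hk.1
    have := hk.2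
    omega
  set k := sSup G with hk
  obtain ⟨hchain, hLk⟩ : k ∈ G := Nat.sSup_mem hGne hbdd
  have hk1 : k + 1 ∉ G := fun h => by
    have := le_csSup hbdd h
    omega
  have hnT : partialSum X n ω < partialSum X (ladderEpoch X k ω) ω :=
    lt_of_le_of_lt hSn (hmin _ hLk)
  have hchain1 : Chain X ω (k + 1) := by
    intro i hi
    rcases Nat.lt_succ_iff_lt_or_eq.mp hi with h | h
    · exact hchain i h
    · subst h
      rw [ladder_succ]
      exact Nat.sInf_mem
        (s := {n' : ℕ | partialSum X n' ω < partialSum X (ladderEpoch X k ω) ω}) ⟨n, hnT⟩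
  have hle : ladderEpoch X (k + 1) ω ≤ n := by
    rw [ladder_succ]
    exact Nat.sInf_le hnT
  have hnlt : ¬ ladderEpoch X (k + 1) ω < n := fun h => hk1 ⟨hchain1, h⟩
  exact ⟨k, hchain1, by omega⟩

/-- Ladder epochs up to time `j` only depend on the partial sums up to time `j`. -/
lemma ladder_agree {Ω₁ Ω₂ : Type*} (X₁ : ℕ → Ω₁ → ℝ) (X₂ : ℕ → Ω₂ → ℝ) (ω₁ : Ω₁) (ω₂ : Ω₂)
    {j : ℕ} (hS : ∀ p ≤ j, partialSum X₁ p ω₁ = partialSum X₂ p ω₂) :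
    ∀ k, Chain X₁ ω₁ k → ladderEpoch X₁ k ω₁ ≤ j →
      (∀ i ≤ k, ladderEpoch X₂ i ω₂ = ladderEpoch X₁ i ω₁) ∧ Chain X₂ ω₂ k := by
  intro k
  induction k with
  | zero =>
    intro _ _
    refine ⟨fun i hi => ?_, fun i hi => absurd hi (Nat.not_lt_zero i)⟩
    rw [Nat.le_zero.mp hi, ladder_zero, ladder_zero]
  | succ k ih =>
    intro hc hLk1
    have hck : Chain X₁ ω₁ k := hc.mono (Nat.le_succ k)
    have hLk : ladderEpoch X₁ k ω₁ ≤ j :=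
      le_trans (le_of_lt (ladder_lt X₁ ω₁ k hc)) hLk1
    obtain ⟨hLs, hch2⟩ := ih hck hLk
    have hpivot : partialSum X₂ (ladderEpoch X₂ k ω₂) ω₂
        = partialSum X₁ (ladderEpoch X₁ k ω₁) ω₁ := by
      rw [hLs k le_rfl, ← hS _ hLk]
    have hq : ladderEpoch X₂ (k + 1) ω₂ = ladderEpoch X₁ (k + 1) ω₁ := by
      rw [ladder_succ X₂ ω₂ k]
      refine nat_sInf_eq ?_ ?_
      · show partialSum X₂ (ladderEpoch X₁ (k + 1) ω₁) ω₂
          < partialSum X₂ (ladderEpoch X₂ k ω₂) ω₂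
        rw [hpivot, ← hS _ hLk1]
        exact hc k (Nat.lt_succ_self k)
      · intro p hp
        have hp' : p ≤ j := le_trans (le_of_lt hp) hLk1
        rw [ladder_succ] at hp
        have := Nat.notMem_of_lt_sInf hp
        simp only [Set.mem_setOf_eq, not_lt] at this
        simp only [Set.mem_setOf_eq, not_lt, hpivot, ← hS _ hp']
        exact this
    refine ⟨fun i hi => ?_, fun i hi => ?_⟩
    · rcases Nat.le_succ_iff_eq_or_le.mp hi with h | h
      · rw [h, hq]
      · exact hLs i h
    · rcases Nat.lt_succ_iff_lt_or_eq.mp hi with h | h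
      · exact hch2 i h
      · subst h
        have h1 : ladderEpoch X₁ (i + 1) ω₁ ≤ j := hLk1
        rw [hq, hLs i le_rfl, ← hS _ h1, ← hS _ hLk]
        exact hc i (Nat.lt_succ_self i)

lemma pS_agree {Ω₁ Ω₂ : Type*} (X₁ : ℕ → Ω₁ → ℝ) (X₂ : ℕ → Ω₂ → ℝ) (ω₁ : Ω₁) (ω₂ : Ω₂)
    (j : ℕ) (h : ∀ i < j, X₁ i ω₁ = X₂ i ω₂) :
    ∀ p ≤ j, partialSum X₁ p ω₁ = partialSum X₂ p ω₂ := by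
  intro p hp
  unfold partialSum
  exact Finset.sum_congr rfl fun i hi =>
    h i (lt_of_lt_of_le (Finset.mem_range.mp hi) hp)

lemma pS_comp (X : ℕ → Ω → ℝ) (ω : Ω) (n : ℕ) :
    partialSum cf n (fun i => X i ω) = partialSum X n ω := rfl

lemma ladder_comp (X : ℕ → Ω → ℝ) (ω : Ω) :
    ∀ k, ladderEpoch cf k (fun i => X i ω) = ladderEpoch X k ω := by
  intro k
  induction k with
  | zero => rfl
  | succ k ih =>
    show sInf _ = sInf _
    rw [ih]
    rfl

lemma pS_shift (X : ℕ → Ω → ℝ) (ω : Ω) (j : ℕ) :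
    ∀ q, partialSum cf q (fun i => X (j + i) ω)
      = partialSum X (j + q) ω - partialSum X j ω := by
  intro q
  induction q with
  | zero => simp [partialSum]
  | succ q ih =>
    have h1 : j + (q + 1) = (j + q) + 1 := by omega
    unfold partialSum at ih ⊢
    rw [h1, Finset.sum_range_succ, Finset.sum_range_succ]
    simp only [cf] at ih ⊢
    rw [ih]
    ring

section Meas

lemma measurable_apply_nat {α β : Type*} [MeasurableSpace α] [MeasurableSpace β]
    {f : ℕ → α → β} {g : α → ℕ} (hf : ∀ j, Measurable (f j)) (hg : Measurable g) :
    Measurable fun a => f (g a) a := by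
  intro s hs
  have h : (fun a => f (g a) a) ⁻¹' s = ⋃ j, g ⁻¹' {j} ∩ f j ⁻¹' s := by
    ext a
    simp only [Set.mem_preimage, Set.mem_iUnion, Set.mem_inter_iff, Set.mem_singleton_iff]
    constructor
    · intro h; exact ⟨g a, rfl, h⟩
    · rintro ⟨j, rfl, h⟩; exact h
  rw [h]
  exact MeasurableSet.iUnion fun j => (hg (measurableSet_singleton j)).inter (hf j hs)

lemma measurable_sS (n : ℕ) : Measurable fun u : ℕ → ℝ => partialSum cf n u := by
  unfold partialSum
  exact Finset.measurable_sum _ fun i _ => measurable_pi_apply i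

lemma measurable_seqL : ∀ k, Measurable fun u : ℕ → ℝ => ladderEpoch cf k u := by
  intro k
  induction k with
  | zero => exact measurable_const
  | succ k ih =>
    have hg : Measurable fun u : ℕ → ℝ => partialSum cf (ladderEpoch cf k u) u :=
      measurable_apply_nat (fun j => measurable_sS j) ih
    have hAset : ∀ nn : ℕ,
        MeasurableSet {u : ℕ → ℝ | partialSum cf nn u < partialSum cf (ladderEpoch cf k u) u} :=
      fun nn => measurableSet_lt (measurable_sS nn) hg
    refine measurable_to_countable' fun m => ?_
    show MeasurableSet {u : ℕ → ℝ | ladderEpoch cf (k + 1) u = m}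
    rcases Nat.eq_zero_or_pos m with rfl | hm
    · have h : {u : ℕ → ℝ | ladderEpoch cf (k + 1) u = 0}
          = {u : ℕ → ℝ | partialSum cf 0 u < partialSum cf (ladderEpoch cf k u) u}
            ∪ ⋂ nn, {u : ℕ → ℝ | partialSum cf nn u < partialSum cf (ladderEpoch cf k u) u}ᶜ := by
        ext u
        rw [Set.mem_setOf_eq, ladder_succ, Nat.sInf_eq_zero]
        simp only [Set.mem_union, Set.mem_setOf_eq, Set.mem_iInter, Set.mem_compl_iff,
          Set.eq_empty_iff_forall_notMem]
      rw [h]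
      exact (hAset 0).union (MeasurableSet.iInter fun nn => (hAset nn).compl)
    · have h : {u : ℕ → ℝ | ladderEpoch cf (k + 1) u = m}
          = {u : ℕ → ℝ | partialSum cf m u < partialSum cf (ladderEpoch cf k u) u}
            ∩ ⋂ p, ⋂ _ : p < m,
              {u : ℕ → ℝ | partialSum cf p u < partialSum cf (ladderEpoch cf k u) u}ᶜ := by
        ext u
        rw [Set.mem_setOf_eq, ladder_succ]
        constructor
        · intro hh
          have hne : {nn : ℕ | partialSum cf nn u < partialSum cf (ladderEpoch cf k u) u}.Nonempty := by
            by_contra hemp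
            rw [Set.not_nonempty_iff_eq_empty] at hemp
            rw [hemp, Nat.sInf_empty] at hh
            omega
          have hmem := Nat.sInf_mem hne
          rw [hh] at hmem
          refine ⟨hmem, ?_⟩
          simp only [Set.mem_iInter, Set.mem_compl_iff, Set.mem_setOf_eq]
          intro p hp
          have := Nat.notMem_of_lt_sInf (hh ▸ hp)
          simpa using this
        · rintro ⟨h1, h2⟩
          simp only [Set.mem_iInter, Set.mem_compl_iff, Set.mem_setOf_eq] at h2
          exact nat_sInf_eq h1 fun p hp => h2 p hp
      rw [h]
      exact (hAset m).inter
        (MeasurableSet.iInter fun p => MeasurableSet.iInter fun _ => (hAset p).compl)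

lemma measurable_SL (k : ℕ) :
    Measurable fun u : ℕ → ℝ => partialSum cf (ladderEpoch cf k u) u :=
  measurable_apply_nat (fun j => measurable_sS j) (measurable_seqL k)

end Meas

lemma measurable_pi_lambda' {α : Type*} {m : MeasurableSpace α} {f : α → ℕ → ℝ}
    (hf : ∀ i, @Measurable α ℝ m _ fun a => f a i) : @Measurable α (ℕ → ℝ) m _ f :=
  measurable_pi_lambda f hf

section Indep

variable [MeasureSpace Ω] [IsProbabilityMeasure (ℙ : Measure Ω)]

lemma iIndepFun_precomp {ι : Type*} (X : ℕ → Ω → ℝ)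
    (hindep : iIndepFun X ℙ) (g : ι → ℕ)
    (hg : Function.Injective g) :
    iIndepFun (fun i => X (g i)) ℙ := by
  classical
  rw [iIndepFun_iff_measure_inter_preimage_eq_mul]
  intro S sets hsets
  set sets' : ℕ → Set ℝ := fun n => ⋃ i ∈ S.filter (fun a => g a = n), sets i with hsets'def
  have hfil : ∀ i ∈ S, S.filter (fun a => g a = g i) = {i} := by
    intro i hi
    ext a
    simp only [Finset.mem_filter, Finset.mem_singleton]
    exact ⟨fun ⟨_, h⟩ => hg h, fun h => ⟨h ▸ hi, h ▸ rfl⟩⟩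
  have hA : ∀ i ∈ S, sets' (g i) = sets i := by
    intro i hi
    rw [hsets'def]
    simp only
    rw [hfil i hi]
    simp
  have hmeas' : ∀ n ∈ S.image g, MeasurableSet (sets' n) := by
    intro n _
    refine Finset.measurableSet_biUnion _ fun i hi => ?_
    exact hsets i (Finset.mem_filter.mp hi).1
  have h1 : (⋂ i ∈ S, (fun ω => X (g i) ω) ⁻¹' sets i)
      = ⋂ n ∈ S.image g, X n ⁻¹' sets' n := by
    ext ωx
    simp only [Set.mem_iInter, Set.mem_preimage, Finset.mem_image]
    constructor
    · rintro h n ⟨i, hi, rfl⟩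
      rw [hA i hi]
      exact h i hi
    · intro h i hi
      have := h (g i) ⟨i, hi, rfl⟩
      rwa [hA i hi] at this
  rw [h1, hindep.measure_inter_preimage_eq_mul (S.image g) hmeas',
    Finset.prod_image fun a _ b _ hab => hg hab]
  exact Finset.prod_congr rfl fun i hi => by rw [hA i hi]

lemma joint_map_pi {ι : Type*} [Fintype ι] (X : ℕ → Ω → ℝ) (X0 : Ω → ℝ)
    (hmeas : ∀ n, Measurable (X n)) (hindep : iIndepFun X ℙ)
    (hident : ∀ n, IdentDistrib (X n) X0 ℙ ℙ) (g : ι → ℕ) (hg : Function.Injective g) :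
    Measure.map (fun ω (i : ι) => X (g i) ω) ℙ
      = Measure.pi (fun _ => Measure.map X0 ℙ) := by
  have hX0 : AEMeasurable X0 ℙ := (hident 0).aemeasurable_snd
  haveI : IsProbabilityMeasure (Measure.map X0 ℙ) := Measure.isProbabilityMeasure_map hX0
  refine (Measure.pi_eq fun s hs => ?_).symm
  rw [Measure.map_apply (measurable_pi_lambda _ fun i => hmeas _) (MeasurableSet.univ_pi hs)]
  have h1 : (fun ω (i : ι) => X (g i) ω) ⁻¹' (Set.univ.pi s)
      = ⋂ i ∈ Finset.univ, (fun ω => X (g i) ω) ⁻¹' s i := by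
    ext ω
    simp [Set.mem_pi]
  rw [h1, (iIndepFun_precomp X hindep g hg).measure_inter_preimage_eq_mul Finset.univ
    fun i _ => hs i]
  refine Finset.prod_congr rfl fun i _ => ?_
  rw [Measure.map_apply_of_aemeasurable hX0 (hs i)]
  exact (hident (g i)).measure_mem_eq (hs i)

lemma map_seq_eq (X : ℕ → Ω → ℝ) (X0 : Ω → ℝ)
    (hmeas : ∀ n, Measurable (X n)) (hindep : iIndepFun X ℙ)
    (hident : ∀ n, IdentDistrib (X n) X0 ℙ ℙ) (g : ℕ → ℕ) (hg : Function.Injective g) :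
    Measure.map (fun ω (i : ℕ) => X (g i) ω) ℙ
      = Measure.map (fun ω (i : ℕ) => X i ω) ℙ := by
  have hm1 : Measurable (fun ω (i : ℕ) => X (g i) ω) :=
    measurable_pi_lambda _ fun i => hmeas _
  have hm2 : Measurable (fun ω (i : ℕ) => X i ω) :=
    measurable_pi_lambda _ fun i => hmeas _
  haveI : IsProbabilityMeasure (Measure.map (fun ω (i : ℕ) => X (g i) ω) ℙ) :=
    Measure.isProbabilityMeasure_map hm1.aemeasurable
  haveI : IsProbabilityMeasure (Measure.map (fun ω (i : ℕ) => X i ω) ℙ) :=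
    Measure.isProbabilityMeasure_map hm2.aemeasurable
  refine ext_of_generate_finite _ generateFrom_measurableCylinders.symm
    isPiSystem_measurableCylinders (fun s hs => ?_) (by simp)
  obtain ⟨F, S, hSm, rfl⟩ := (mem_measurableCylinders _).mp hs
  rw [Measure.map_apply hm1 hSm.cylinder, Measure.map_apply hm2 hSm.cylinder]
  have e1 : (fun ω (i : ℕ) => X (g i) ω) ⁻¹' cylinder F S
      = (fun ω (i : F) => X (g i) ω) ⁻¹' S := rfl
  have e2 : (fun ω (i : ℕ) => X i ω) ⁻¹' cylinder F S
      = (fun ω (i : F) => X (i : ℕ) ω) ⁻¹' S := rfl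
  rw [e1, e2,
    ← Measure.map_apply (measurable_pi_lambda _ fun i : F => hmeas (g i)) hSm,
    ← Measure.map_apply (measurable_pi_lambda _ fun i : F => hmeas (i : ℕ)) hSm,
    joint_map_pi X X0 hmeas hindep hident (fun i : F => g (i : ℕ))
      (hg.comp Subtype.val_injective),
    joint_map_pi X X0 hmeas hindep hident (fun i : F => (i : ℕ)) Subtype.val_injective]

end Indep

end OvershootTail

open OvershootTail in
/-- for `0 < x ≤ m` and `t > 0`,
`P[x + S(τ_x) < −t] ≤ U(m) · P[S(ℓ₁) < −t]`. -/
theorem overshoot_tail_bound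
    {Ω : Type*} [MeasureSpace Ω] [IsProbabilityMeasure (ℙ : Measure Ω)]
    (X : ℕ → Ω → ℝ) (X0 : Ω → ℝ)
    (hmeas : ∀ n, Measurable (X n))
    (hindep : iIndepFun X ℙ)
    (hident : ∀ n, IdentDistrib (X n) X0 ℙ ℙ)
    (hsq : Integrable (fun ω => X0 ω ^ 2) ℙ)
    (hcent : ∫ ω, X0 ω ∂ℙ = 0)
    (m : ℝ) (hm : 0 < m) (hU : potentialU X m ≠ ⊤)
    (t : ℝ) (ht : 0 < t) (x : ℝ) (hx0 : 0 < x) (hxm : x ≤ m) :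
    ℙ {ω | exitTime X x ω ≠ ⊤ ∧ x + partialSum X (exitTime X x ω).toNat ω < -t} ≤
      potentialU X m * ℙ {ω | partialSum X (ladderEpoch X 1 ω) ω < -t} := by
  classical
  -- sequence-space objects
  set Z : Ω → ℕ → ℝ := fun ω i => X i ω with hZdef
  have hZm : Measurable Z := measurable_pi_lambda _ hmeas
  set D : Set (ℕ → ℝ) := {u | partialSum cf (ladderEpoch cf 1 u) u < -t} with hDdef
  have hDm : MeasurableSet D := measurableSet_lt (measurable_SL 1) measurable_const
  have hRHSev : {ω | partialSum X (ladderEpoch X 1 ω) ω < -t} = Z ⁻¹' D := by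
    ext ω
    simp only [Set.mem_setOf_eq, Set.mem_preimage, hZdef, hDdef]
    rw [ladder_comp X ω 1, pS_comp]
  -- the good events
  set B : ℕ → ℕ → Set (ℕ → ℝ) := fun k j =>
    {u | Chain cf u k ∧ ladderEpoch cf k u = j ∧ partialSum cf j u ∈ Set.Ioc (-x) 0}
    with hBdef
  have hBm : ∀ k j, MeasurableSet (B k j) := by
    intro k j
    have h1 : {u : ℕ → ℝ | Chain cf u k}
        = ⋂ i, ⋂ _ : i < k,
          {u : ℕ → ℝ | partialSum cf (ladderEpoch cf (i + 1) u) u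
            < partialSum cf (ladderEpoch cf i u) u} := by
      ext u
      simp [Chain]
    have hc : MeasurableSet {u : ℕ → ℝ | Chain cf u k} := by
      rw [h1]
      exact MeasurableSet.iInter fun i => MeasurableSet.iInter fun _ =>
        measurableSet_lt (measurable_SL (i + 1)) (measurable_SL i)
    exact (hc.inter ((measurable_seqL k (measurableSet_singleton j)).inter
      ((measurable_sS j) measurableSet_Ioc)))
  set A : ℕ → ℕ → Set Ω := fun k j => Z ⁻¹' B k j with hAdef
  set C : ℕ → Set Ω := fun j => (fun ω (i : ℕ) => X (j + i) ω) ⁻¹' D with hCdef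
  have hVm : ∀ j : ℕ, Measurable (fun ω (i : ℕ) => X (j + i) ω) := fun j =>
    measurable_pi_lambda _ fun i => hmeas _
  -- probability of C j
  have hmapshift : ∀ j : ℕ,
      Measure.map (fun ω (i : ℕ) => X (j + i) ω) ℙ = Measure.map Z ℙ := fun j =>
    map_seq_eq X X0 hmeas hindep hident (fun i => j + i) (add_right_injective j)
  have hCprob : ∀ j, ℙ (C j) = ℙ (Z ⁻¹' D) := by
    intro j
    rw [hCdef]
    simp only
    rw [← Measure.map_apply (hVm j) hDm, ← Measure.map_apply hZm hDm, hmapshift j]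
  -- independence
  have hIndep : ∀ j : ℕ,
      Indep (⨆ i ∈ Set.Iio j, MeasurableSpace.comap (X i) inferInstance)
        (⨆ i ∈ Set.Ici j, MeasurableSpace.comap (X i) inferInstance) ℙ := fun j =>
    indep_iSup_of_disjoint (fun i => (hmeas i).comap_le)
      ((iIndepFun_iff_iIndep _ _ _).mp hindep) (Set.Iio_disjoint_Ici le_rfl)
  -- A k j is measurable w.r.t. the first j coordinates
  have hAeq : ∀ k j (ω : Ω),
      Z ω ∈ B k j ↔ (fun i => if i < j then X i ω else 0) ∈ B k j := by
    intro k j ω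
    have hag : ∀ p ≤ j, partialSum cf p (Z ω)
        = partialSum cf p (fun i => if i < j then X i ω else 0) := by
      refine pS_agree _ _ _ _ j fun i hi => ?_
      show Z ω i = if i < j then X i ω else 0
      rw [if_pos hi]
    have hag' : ∀ p ≤ j, partialSum cf p (fun i => if i < j then X i ω else 0)
        = partialSum cf p (Z ω) := fun p hp => (hag p hp).symm
    simp only [hBdef, Set.mem_setOf_eq]
    constructor
    · rintro ⟨hch, hL, hIoc⟩
      obtain ⟨hLs, hch'⟩ := ladder_agree cf cf (Z ω) _ hag k hch (le_of_eq hL)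
      exact ⟨hch', by rw [hLs k le_rfl, hL], by rw [← hag j le_rfl]; exact hIoc⟩
    · rintro ⟨hch, hL, hIoc⟩
      obtain ⟨hLs, hch'⟩ := ladder_agree cf cf _ (Z ω) hag' k hch (le_of_eq hL)
      exact ⟨hch', by rw [hLs k le_rfl, hL], by rw [← hag' j le_rfl]; exact hIoc⟩
  have hA1 : ∀ k j, MeasurableSet[⨆ i ∈ Set.Iio j,
      MeasurableSpace.comap (X i) inferInstance] (A k j) := by
    intro k j
    have hWm : Measurable[⨆ i ∈ Set.Iio j, MeasurableSpace.comap (X i) inferInstance]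
        (fun ω (i : ℕ) => if i < j then X i ω else 0) := by
      refine measurable_pi_lambda' fun i => ?_
      by_cases h : i < j
      · simp only [if_pos h]
        have h1 : @Measurable Ω ℝ (MeasurableSpace.comap (X i) inferInstance) _ (X i) :=
          fun s hs => ⟨s, hs, rfl⟩
        exact h1.mono
          (le_biSup (f := fun i => MeasurableSpace.comap (X i)
            (inferInstance : MeasurableSpace ℝ)) h) le_rfl
      · simp only [if_neg h]
        exact measurable_const
    have h : A k j = (fun ω (i : ℕ) => if i < j then X i ω else 0) ⁻¹' B k j :=
      Set.ext fun ω => hAeq k j ω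
    rw [h]
    exact hWm (hBm k j)
  have hC2 : ∀ j, MeasurableSet[⨆ i ∈ Set.Ici j,
      MeasurableSpace.comap (X i) inferInstance] (C j) := by
    intro j
    have hVm2 : Measurable[⨆ i ∈ Set.Ici j, MeasurableSpace.comap (X i) inferInstance]
        (fun ω (i : ℕ) => X (j + i) ω) :=
      measurable_pi_lambda' fun i => by
        have h1 : @Measurable Ω ℝ (MeasurableSpace.comap (X (j + i)) inferInstance) _
            (X (j + i)) := fun s hs => ⟨s, hs, rfl⟩
        exact h1.mono
          (le_biSup (f := fun i => MeasurableSpace.comap (X i)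
            (inferInstance : MeasurableSpace ℝ)) (Set.mem_Ici.mpr (Nat.le_add_right j i)))
          le_rfl
    exact hVm2 hDm
  have hAC : ∀ k j, ℙ (A k j ∩ C j) = ℙ (A k j) * ℙ (Z ⁻¹' D) := by
    intro k j
    rw [(Indep_iff _ _ _).mp (hIndep j) _ _ (hA1 k j) (hC2 j), hCprob j]
  -- pathwise inclusion
  have hincl : {ω | exitTime X x ω ≠ ⊤ ∧ x + partialSum X (exitTime X x ω).toNat ω < -t}
      ⊆ ⋃ k, ⋃ j, A k j ∩ C j := by
    rintro ω ⟨hfin, hover⟩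
    set T : Set ℕ := {p | 1 ≤ p ∧ x + partialSum X p ω ≤ 0} with hTdef
    have hsetT : {n : ℕ∞ | ∃ m' : ℕ, (m' : ℕ∞) = n ∧ 1 ≤ m' ∧ x + partialSum X m' ω ≤ 0}
        = (fun m' : ℕ => (m' : ℕ∞)) '' T := by
      ext nn
      constructor
      · rintro ⟨m', rfl, h1, h2⟩
        exact ⟨m', ⟨h1, h2⟩, rfl⟩
      · rintro ⟨m', ⟨h1, h2⟩, rfl⟩
        exact ⟨m', rfl, h1, h2⟩
    have hTne : T.Nonempty := by
      by_contra hemp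
      rw [Set.not_nonempty_iff_eq_empty] at hemp
      apply hfin
      unfold exitTime
      rw [hsetT, hemp, Set.image_empty, sInf_empty]
    set n₀ := sInf T with hn₀def
    have hmemT : n₀ ∈ T := Nat.sInf_mem hTne
    have hexit : exitTime X x ω = (n₀ : ℕ∞) := by
      unfold exitTime
      rw [hsetT]
      apply le_antisymm
      · exact sInf_le ⟨n₀, hmemT, rfl⟩
      · refine le_sInf ?_
        rintro b ⟨m', hm', rfl⟩
        show (n₀ : ℕ∞) ≤ (m' : ℕ∞)
        exact_mod_cast Nat.sInf_le hm'
    have htn : (exitTime X x ω).toNat = n₀ := by rw [hexit]; exact ENat.toNat_coe n₀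
    rw [htn] at hover
    have hn1 : 1 ≤ n₀ := hmemT.1
    have hSn : partialSum X n₀ ω ≤ -x := by linarith [hmemT.2]
    have hminp : ∀ p < n₀, -x < partialSum X p ω := by
      intro p hp
      rcases Nat.eq_zero_or_pos p with h0 | h1
      · rw [h0, pS_zero]; linarith
      · have hnm : p ∉ T := Nat.notMem_of_lt_sInf hp
        rw [hTdef] at hnm
        simp only [Set.mem_setOf_eq, not_and, not_le] at hnm
        linarith [hnm h1]
    obtain ⟨k, hchain, hLk1⟩ := exists_chain X ω hx0 hn1 hSn hminp
    set j := ladderEpoch X k ω with hjdef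
    have hchk : Chain X ω k := hchain.mono (Nat.le_succ k)
    have hjlt : j < n₀ := by rw [← hLk1]; exact ladder_lt X ω k hchain
    have hSj_pos : -x < partialSum X j ω := hminp j hjlt
    have hSj_np : partialSum X j ω ≤ 0 := ladder_nonpos X ω k hchk
    refine Set.mem_iUnion.mpr ⟨k, Set.mem_iUnion.mpr ⟨j, ?_, ?_⟩⟩
    · -- ω ∈ A k j
      show Z ω ∈ B k j
      simp only [hBdef, Set.mem_setOf_eq]
      refine ⟨?_, ?_, ?_⟩
      · intro i hi
        simp only [hZdef]
        rw [ladder_comp X ω (i + 1), ladder_comp X ω i, pS_comp, pS_comp]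
        exact hchk i hi
      · simp only [hZdef]
        rw [ladder_comp X ω k]
      · simp only [hZdef]
        rw [pS_comp]
        exact ⟨hSj_pos, hSj_np⟩
    · -- ω ∈ C j
      show (fun i => X (j + i) ω) ∈ D
      simp only [hDdef, Set.mem_setOf_eq]
      have hu : ∀ q, partialSum cf q (fun i => X (j + i) ω)
          = partialSum X (j + q) ω - partialSum X j ω := pS_shift X ω j
      have h00 : partialSum cf (ladderEpoch cf 0 (fun i => X (j + i) ω))
          (fun i => X (j + i) ω) = 0 := pS_zero _ _
      have hL1 : ladderEpoch cf 1 (fun i => X (j + i) ω) = n₀ - j := by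
        rw [ladder_succ]
        refine nat_sInf_eq ?_ ?_
        · show partialSum cf (n₀ - j) (fun i => X (j + i) ω) < _
          rw [h00, hu, (by omega : j + (n₀ - j) = n₀)]
          linarith
        · intro q hq hmem
          rw [Set.mem_setOf_eq, h00, hu] at hmem
          have hjq : j + q < n₀ := by omega
          have hnm : (j + q) ∉ {p : ℕ |
              partialSum X p ω < partialSum X (ladderEpoch X k ω) ω} := by
            apply Nat.notMem_of_lt_sInf
            rw [← ladder_succ, hLk1]
            exact hjq
          simp only [Set.mem_setOf_eq, not_lt, ← hjdef] at hnm
          linarith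
      rw [hL1, hu, (by omega : j + (n₀ - j) = n₀)]
      linarith
  -- disjointness in j
  have hdisj : ∀ k, Pairwise (Function.onFun Disjoint fun j => A k j) := by
    intro k j j' hjj'
    refine Set.disjoint_left.mpr ?_
    rintro ω hω hω'
    obtain ⟨_, hL, _⟩ := hω
    obtain ⟨_, hL', _⟩ := hω'
    exact hjj' (by rw [← hL, hL'])
  -- union over j is inside the U(m) event
  have hAsub : ∀ k, (⋃ j, A k j)
      ⊆ {ω | partialSum X (ladderEpoch X k ω) ω ∈ Set.Ioc (-m) 0} := by
    intro k ω hω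
    obtain ⟨j, hj⟩ := Set.mem_iUnion.mp hω
    obtain ⟨hch, hL, hIoc⟩ := hj
    have h1 : ladderEpoch X k ω = j := by
      rw [← ladder_comp X ω k]
      exact hL
    rw [Set.mem_setOf_eq, h1]
    have h2 : partialSum cf j (Z ω) = partialSum X j ω := pS_comp X ω j
    rw [h2] at hIoc
    exact ⟨lt_of_le_of_lt (by linarith) hIoc.1, hIoc.2⟩
  -- put everything together
  calc ℙ {ω | exitTime X x ω ≠ ⊤ ∧ x + partialSum X (exitTime X x ω).toNat ω < -t}
      ≤ ℙ (⋃ k, ⋃ j, A k j ∩ C j) := measure_mono hincl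
    _ ≤ ∑' k, ℙ (⋃ j, A k j ∩ C j) := measure_iUnion_le _
    _ ≤ ∑' k, ∑' j, ℙ (A k j ∩ C j) :=
        ENNReal.tsum_le_tsum fun k => measure_iUnion_le _
    _ = ∑' k, ∑' j, ℙ (A k j) * ℙ (Z ⁻¹' D) := by
        refine tsum_congr fun k => tsum_congr fun j => hAC k j
    _ = ∑' k, (∑' j, ℙ (A k j)) * ℙ (Z ⁻¹' D) := by
        refine tsum_congr fun k => ?_
        rw [ENNReal.tsum_mul_right]
    _ = ∑' k, ℙ (⋃ j, A k j) * ℙ (Z ⁻¹' D) := by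
        refine tsum_congr fun k => ?_
        rw [measure_iUnion (hdisj k) fun j => hZm (hBm k j)]
    _ ≤ ∑' k, ℙ {ω | partialSum X (ladderEpoch X k ω) ω ∈ Set.Ioc (-m) 0}
          * ℙ (Z ⁻¹' D) :=
        ENNReal.tsum_le_tsum fun k =>
          mul_le_mul_left (measure_mono (hAsub k)) _
    _ = potentialU X m * ℙ (Z ⁻¹' D) := by
        rw [ENNReal.tsum_mul_right]
        rfl
    _ = potentialU X m * ℙ {ω | partialSum X (ladderEpoch X 1 ω) ω < -t} := by
        rw [hRHSev]
end

section
/- In the mixed-drift setting (X₁ centered with E[|X₁|^{2+δ}] < ∞; X₂ with E[X₂²] < ∞, m = E[X₂] > 0 and E[(X₂⁻)^{3+δ}] < ∞), the function h(x) = x₁ − E[(x₁ + S₁(τ_x)); τ_x < ∞] on the open quadrant is harmonic for the two-dimensional random walk killed upon exiting the quadrant: h(x) = E[h(x + S(1)); τ_x > 1]. -/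
open MeasureTheory ProbabilityTheory Filter Set
open scoped ENNReal NNReal

noncomputable def partialSum2 {Ω : Type*} (X : ℕ → Ω → ℝ × ℝ) (n : ℕ) (ω : Ω) : ℝ × ℝ :=
  ∑ i ∈ Finset.range n, X i ω

noncomputable def exitTimeQuadrant {Ω : Type*} (X : ℕ → Ω → ℝ × ℝ) (x : ℝ × ℝ) (ω : Ω) : ℕ∞ :=
  sInf {n : ℕ∞ | ∃ m : ℕ, (m : ℕ∞) = n ∧ 1 ≤ m ∧
    ¬ (0 < x.1 + (partialSum2 X m ω).1 ∧ 0 < x.2 + (partialSum2 X m ω).2)}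

namespace HQAux

def exitAt {Ω : Type*} (X : ℕ → Ω → ℝ × ℝ) (x : ℝ × ℝ) (m : ℕ) (ω : Ω) : Prop :=
  1 ≤ m ∧ ¬ (0 < x.1 + (partialSum2 X m ω).1 ∧ 0 < x.2 + (partialSum2 X m ω).2)

lemma exit_def {Ω : Type*} (X : ℕ → Ω → ℝ × ℝ) (x : ℝ × ℝ) (ω : Ω) :
    exitTimeQuadrant X x ω = sInf ((fun m : ℕ => (m : ℕ∞)) '' {m | exitAt X x m ω}) := by
  unfold exitTimeQuadrant
  congr 1
  ext n
  simp only [Set.mem_setOf_eq, Set.mem_image, exitAt]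
  constructor
  · rintro ⟨m, h1, h2, h3⟩; exact ⟨m, ⟨h2, h3⟩, h1⟩
  · rintro ⟨m, ⟨h2, h3⟩, h1⟩; exact ⟨m, h1, h2, h3⟩

lemma exit_eq_top_iff {Ω : Type*} (X : ℕ → Ω → ℝ × ℝ) (x : ℝ × ℝ) (ω : Ω) :
    exitTimeQuadrant X x ω = ⊤ ↔ ∀ m, ¬ exitAt X x m ω := by
  rw [exit_def, sInf_eq_top]
  constructor
  · intro h m hm
    exact (ENat.coe_ne_top m) (h _ ⟨m, hm, rfl⟩)
  · rintro h n ⟨m, hm, rfl⟩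
    exact absurd hm (h m)

lemma sInf_image_coe {B : Set ℕ} (hB : B.Nonempty) :
    sInf ((fun m : ℕ => (m : ℕ∞)) '' B) = ((sInf B : ℕ) : ℕ∞) := by
  apply le_antisymm
  · exact sInf_le ⟨sInf B, Nat.sInf_mem hB, rfl⟩
  · apply le_sInf
    rintro n ⟨k, hk, rfl⟩
    show ((sInf B : ℕ) : ℕ∞) ≤ (k : ℕ∞)
    exact_mod_cast Nat.sInf_le hk

lemma exit_eq_coe_iff {Ω : Type*} (X : ℕ → Ω → ℝ × ℝ) (x : ℝ × ℝ) (ω : Ω) (m : ℕ) :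
    exitTimeQuadrant X x ω = (m : ℕ∞) ↔
      exitAt X x m ω ∧ ∀ k < m, ¬ exitAt X x k ω := by
  constructor
  · intro h
    have hne : {k | exitAt X x k ω}.Nonempty := by
      by_contra hemp
      rw [Set.not_nonempty_iff_eq_empty] at hemp
      have htop : exitTimeQuadrant X x ω = ⊤ := by
        rw [exit_eq_top_iff]
        intro k hk
        have : k ∈ ({k | exitAt X x k ω} : Set ℕ) := hk
        rw [hemp] at this
        exact this
      rw [htop] at h
      exact (ENat.coe_ne_top m) h.symm
    rw [exit_def, sInf_image_coe hne] at h
    have hm : sInf {k | exitAt X x k ω} = m := by exact_mod_cast h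
    constructor
    · rw [← hm]; exact Nat.sInf_mem hne
    · intro k hk
      rw [← hm] at hk
      exact Nat.notMem_of_lt_sInf hk
  · rintro ⟨h1, h2⟩
    rw [exit_def]
    apply le_antisymm
    · exact sInf_le ⟨m, h1, rfl⟩
    · apply le_sInf
      rintro n ⟨k, hk, rfl⟩
      by_contra hlt
      push_neg at hlt
      have : k < m := by exact_mod_cast hlt
      exact h2 k this hk

lemma one_le_exit {Ω : Type*} (X : ℕ → Ω → ℝ × ℝ) (x : ℝ × ℝ) (ω : Ω) :
    1 ≤ exitTimeQuadrant X x ω := by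
  rw [exit_def]
  apply le_sInf
  rintro n ⟨k, hk, rfl⟩
  show (1 : ℕ∞) ≤ (k : ℕ∞)
  exact_mod_cast hk.1

lemma one_lt_exit_iff {Ω : Type*} (X : ℕ → Ω → ℝ × ℝ) (x : ℝ × ℝ) (ω : Ω) :
    1 < exitTimeQuadrant X x ω ↔ (0 < x.1 + (X 0 ω).1 ∧ 0 < x.2 + (X 0 ω).2) := by
  have hS1 : partialSum2 X 1 ω = X 0 ω := by simp [partialSum2]
  constructor
  · intro h
    by_contra hpos
    have h1 : exitAt X x 1 ω := ⟨le_refl 1, by rw [hS1]; exact hpos⟩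
    have hle : exitTimeQuadrant X x ω ≤ 1 := by
      rw [exit_def]
      exact sInf_le ⟨1, h1, by norm_cast⟩
    exact absurd h (not_lt.mpr hle)
  · intro hpos
    rcases eq_top_or_lt_top (exitTimeQuadrant X x ω) with htop | hlt
    · rw [htop]; exact Ne.lt_top (by simp)
    · obtain ⟨m, hm⟩ := WithTop.ne_top_iff_exists.1 hlt.ne
      rw [← hm]
      obtain ⟨h1, _⟩ := (exit_eq_coe_iff X x ω m).1 hm.symm
      have hm1 : m ≠ 1 := by
        rintro rfl
        exact h1.2 (by rw [hS1]; exact hpos)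
      have h2m : 2 ≤ m := by
        have := h1.1
        omega
      have : ((1 : ℕ) : ℕ∞) < (m : ℕ∞) := ENat.coe_lt_coe.mpr (by omega)
      exact this

lemma partialSum2_succ {Ω : Type*} (X : ℕ → Ω → ℝ × ℝ) (k : ℕ) (ω : Ω) :
    partialSum2 X (k + 1) ω = X 0 ω + partialSum2 (fun n => X (n + 1)) k ω := by
  unfold partialSum2
  rw [Finset.sum_range_succ']
  exact add_comm _ _

lemma exitAt_shift {Ω : Type*} (X : ℕ → Ω → ℝ × ℝ) (x : ℝ × ℝ) (ω : Ω) (k : ℕ) (hk : 1 ≤ k) :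
    exitAt X x (k + 1) ω ↔ exitAt (fun n => X (n + 1)) (x + X 0 ω) k ω := by
  unfold exitAt
  rw [partialSum2_succ]
  simp only [Prod.fst_add, Prod.snd_add, hk, true_and, le_add_iff_nonneg_left, Nat.zero_le,
    ← add_assoc]

lemma exit_shift {Ω : Type*} (X : ℕ → Ω → ℝ × ℝ) (x : ℝ × ℝ) (ω : Ω)
    (hpos : 0 < x.1 + (X 0 ω).1 ∧ 0 < x.2 + (X 0 ω).2) :
    exitTimeQuadrant X x ω = 1 + exitTimeQuadrant (fun n => X (n + 1)) (x + X 0 ω) ω := by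
  have hS1 : partialSum2 X 1 ω = X 0 ω := by simp [partialSum2]
  have hA1 : ¬ exitAt X x 1 ω := fun h => h.2 (by rw [hS1]; exact hpos)
  rcases eq_top_or_lt_top (exitTimeQuadrant (fun n => X (n + 1)) (x + X 0 ω) ω) with htop | hlt
  · rw [htop]
    have h' := (exit_eq_top_iff _ _ _).1 htop
    have : exitTimeQuadrant X x ω = ⊤ := by
      rw [exit_eq_top_iff]
      intro m hm
      match m, hm with
      | 0, hm => exact absurd hm.1 (by norm_num)
      | 1, hm => exact hA1 hm
      | (k+2), hm =>
        exact h' (k+1) ((exitAt_shift X x ω (k+1) (by omega)).1 hm)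
    rw [this]; simp
  · obtain ⟨m, hm⟩ := WithTop.ne_top_iff_exists.1 hlt.ne
    rw [← hm]
    obtain ⟨h1, h2⟩ := (exit_eq_coe_iff _ _ _ m).1 hm.symm
    have : exitTimeQuadrant X x ω = ((m + 1 : ℕ) : ℕ∞) := by
      rw [exit_eq_coe_iff]
      refine ⟨(exitAt_shift X x ω m h1.1).2 h1, ?_⟩
      intro j hj
      match j, hj with
      | 0, hj => exact fun hc => absurd hc.1 (by norm_num)
      | 1, hj => exact hA1
      | (k+2), hj =>
        exact fun hc => h2 (k+1) (by omega) ((exitAt_shift X x ω (k+1) (by omega)).1 hc)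
    rw [this]
    push_cast
    exact add_comm _ _

end HQAux

namespace HQAux

abbrev Seq : Type := ℕ → ℝ × ℝ

noncomputable def cX : ℕ → Seq → ℝ × ℝ := fun n z => z n

lemma measurable_exitAt_set (m : ℕ) :
    MeasurableSet {p : (ℝ × ℝ) × Seq | exitAt cX p.1 m p.2} := by
  have hsum : Measurable (fun p : (ℝ × ℝ) × Seq => partialSum2 cX m p.2) := by
    unfold partialSum2 cX
    exact Finset.measurable_sum _ (fun i _ => (measurable_pi_apply i).comp measurable_snd)
  have h1 : Measurable (fun p : (ℝ × ℝ) × Seq => p.1.1 + (partialSum2 cX m p.2).1) :=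
    (measurable_fst.fst).add hsum.fst
  have h2 : Measurable (fun p : (ℝ × ℝ) × Seq => p.1.2 + (partialSum2 cX m p.2).2) :=
    (measurable_fst.snd).add hsum.snd
  by_cases hm : 1 ≤ m
  · have : {p : (ℝ × ℝ) × Seq | exitAt cX p.1 m p.2}
        = ({p : (ℝ × ℝ) × Seq | 0 < p.1.1 + (partialSum2 cX m p.2).1}
          ∩ {p : (ℝ × ℝ) × Seq | 0 < p.1.2 + (partialSum2 cX m p.2).2})ᶜ := by
      ext p
      simp [exitAt, hm, not_and_or]
    rw [this]
    exact ((measurableSet_lt measurable_const h1).inter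
      (measurableSet_lt measurable_const h2)).compl
  · have : {p : (ℝ × ℝ) × Seq | exitAt cX p.1 m p.2} = ∅ := by
      ext p; simp [exitAt, hm]
    rw [this]
    exact MeasurableSet.empty

lemma measurable_exit_joint :
    Measurable (fun p : (ℝ × ℝ) × Seq => exitTimeQuadrant cX p.1 p.2) := by
  rw [ENat.measurable_iff]
  intro m
  have heq : (fun p : (ℝ × ℝ) × Seq => exitTimeQuadrant cX p.1 p.2) ⁻¹' {(m : ℕ∞)}
      = {p : (ℝ × ℝ) × Seq | exitAt cX p.1 m p.2}
        ∩ ⋂ k ∈ Finset.range m, {p : (ℝ × ℝ) × Seq | exitAt cX p.1 k p.2}ᶜ := by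
    ext p
    simp only [Set.mem_preimage, Set.mem_singleton_iff, Set.mem_inter_iff, Set.mem_iInter,
      Set.mem_compl_iff, Set.mem_setOf_eq, Finset.mem_range]
    rw [exit_eq_coe_iff]
  rw [heq]
  exact (measurable_exitAt_set m).inter
    (MeasurableSet.biInter (Finset.range m).countable_toSet
      (fun k _ => (measurable_exitAt_set k).compl))

lemma measurable_T (x : ℝ × ℝ) :
    Measurable (fun p : (ℝ × ℝ) × Seq => exitTimeQuadrant cX (x + p.1) p.2) :=
  measurable_exit_joint.comp ((measurable_const.add measurable_fst).prodMk measurable_snd)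

noncomputable def Phi (x : ℝ × ℝ) : (ℝ × ℝ) × Seq → ℝ := fun p =>
  if (0 < x.1 + p.1.1 ∧ 0 < x.2 + p.1.2) then
    Set.indicator {q : (ℝ × ℝ) × Seq | exitTimeQuadrant cX (x + q.1) q.2 ≠ ⊤}
      (fun q => (x + q.1).1
        + (partialSum2 cX ((exitTimeQuadrant cX (x + q.1) q.2).toNat) q.2).1) p
  else 0

lemma measurable_Phi (x : ℝ × ℝ) : Measurable (Phi x) := by
  have hT := measurable_T x
  have hset : MeasurableSet {q : (ℝ × ℝ) × Seq | exitTimeQuadrant cX (x + q.1) q.2 ≠ ⊤} := by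
    have : {q : (ℝ × ℝ) × Seq | exitTimeQuadrant cX (x + q.1) q.2 ≠ ⊤}
        = ((fun p : (ℝ × ℝ) × Seq => exitTimeQuadrant cX (x + p.1) p.2) ⁻¹' {⊤})ᶜ := by
      ext q; simp
    rw [this]
    exact (hT (measurableSet_singleton ⊤)).compl
  have hcond : MeasurableSet {p : (ℝ × ℝ) × Seq | 0 < x.1 + p.1.1 ∧ 0 < x.2 + p.1.2} := by
    exact (measurableSet_lt measurable_const (measurable_const.add measurable_fst.fst)).inter
      (measurableSet_lt measurable_const (measurable_const.add measurable_fst.snd))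
  have hN : Measurable (fun q : (ℝ × ℝ) × Seq => (exitTimeQuadrant cX (x + q.1) q.2).toNat) :=
    (measurable_of_countable ENat.toNat).comp hT
  have hf : Measurable (fun r : ((ℝ × ℝ) × Seq) × ℕ =>
      (x + r.1.1).1 + (partialSum2 cX r.2 r.1.2).1) := by
    apply measurable_from_prod_countable_left
    intro n
    have hsum : Measurable (fun p : (ℝ × ℝ) × Seq => partialSum2 cX n p.2) := by
      unfold partialSum2 cX
      exact Finset.measurable_sum _ (fun i _ => (measurable_pi_apply i).comp measurable_snd)
    exact ((measurable_const.add measurable_fst).fst).add hsum.fst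
  have hinner : Measurable (fun q : (ℝ × ℝ) × Seq =>
      (x + q.1).1 + (partialSum2 cX ((exitTimeQuadrant cX (x + q.1) q.2).toNat) q.2).1) :=
    hf.comp (measurable_id.prodMk hN)
  exact Measurable.ite hcond (hinner.indicator hset) measurable_const

lemma indep_mono {Ω : Type*} {m0 : MeasurableSpace Ω} {μ : Measure Ω}
    {m₁ m₂ m₁' m₂' : MeasurableSpace Ω}
    (h : Indep m₁ m₂ μ) (h1 : m₁' ≤ m₁) (h2 : m₂' ≤ m₂) : Indep m₁' m₂' μ := by
  rw [Indep_iff] at h ⊢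
  exact fun t1 t2 ht1 ht2 => h t1 t2 (h1 _ ht1) (h2 _ ht2)

end HQAux

namespace HQAux

lemma box_formula {Ω : Type*} [MeasureSpace Ω]
    (X : ℕ → Ω → ℝ × ℝ)
    (hindep : iIndepFun X ℙ)
    (f : ℕ → ℕ) (hf : Function.Injective f)
    (u : Finset ℕ) (t : ℕ → Set (ℝ × ℝ)) (ht : ∀ i, MeasurableSet (t i)) :
    ℙ (⋂ i ∈ u, X (f i) ⁻¹' t i) = ∏ i ∈ u, ℙ (X (f i) ⁻¹' t i) := by
  classical
  set sets : ℕ → Set (ℝ × ℝ) := fun n => ⋃ (i : ℕ) (_ : i ∈ u ∧ f i = n), t i with hsets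
  have hsets_meas : ∀ n, MeasurableSet (sets n) :=
    fun n => MeasurableSet.iUnion (fun i => MeasurableSet.iUnion (fun _ => ht i))
  have hsets_eq : ∀ i ∈ u, sets (f i) = t i := by
    intro i hi
    ext z
    simp only [hsets, Set.mem_iUnion]
    constructor
    · rintro ⟨j, ⟨hj, hfj⟩, hz⟩
      rwa [hf hfj] at hz
    · intro hz
      exact ⟨i, ⟨hi, rfl⟩, hz⟩
  have key := hindep.measure_inter_preimage_eq_mul (μ := ℙ) (u.image f)
    (sets := sets) (fun n _ => hsets_meas n)
  have hinter : (⋂ n ∈ u.image f, X n ⁻¹' sets n) = ⋂ i ∈ u, X (f i) ⁻¹' t i := by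
    ext ω
    simp only [Set.mem_iInter, Finset.mem_image, Set.mem_preimage]
    constructor
    · intro h i hi
      have := h (f i) ⟨i, hi, rfl⟩
      rwa [hsets_eq i hi] at this
    · rintro h n ⟨i, hi, rfl⟩
      rw [hsets_eq i hi]
      exact h i hi
  have hprod : (∏ n ∈ u.image f, ℙ (X n ⁻¹' sets n)) = ∏ i ∈ u, ℙ (X (f i) ⁻¹' t i) := by
    rw [Finset.prod_image (fun i _ j _ h => hf h)]
    exact Finset.prod_congr rfl (fun i hi => by rw [hsets_eq i hi])
  rw [hinter, hprod] at key
  exact key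

lemma map_shift_eq {Ω : Type*} [MeasureSpace Ω] [IsProbabilityMeasure (ℙ : Measure Ω)]
    (X : ℕ → Ω → ℝ × ℝ) (X0 : Ω → ℝ × ℝ)
    (hmeas : ∀ n, Measurable (X n))
    (hindep : iIndepFun X ℙ)
    (hident : ∀ n, IdentDistrib (X n) X0 ℙ ℙ) :
    Measure.map (fun ω (n : ℕ) => X (n + 1) ω) ℙ = Measure.map (fun ω (n : ℕ) => X n ω) ℙ := by
  have hZ : Measurable (fun ω (n : ℕ) => X (n + 1) ω) :=
    measurable_pi_lambda _ (fun n => hmeas (n + 1))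
  have hW : Measurable (fun ω (n : ℕ) => X n ω) :=
    measurable_pi_lambda _ (fun n => hmeas n)
  haveI hPZ : IsProbabilityMeasure (Measure.map (fun ω (n : ℕ) => X (n + 1) ω) ℙ) :=
    Measure.isProbabilityMeasure_map hZ.aemeasurable
  haveI hPW : IsProbabilityMeasure (Measure.map (fun ω (n : ℕ) => X n ω) ℙ) :=
    Measure.isProbabilityMeasure_map hW.aemeasurable
  refine ext_of_generate_finite _ generateFrom_squareCylinders.symm
    (isPiSystem_squareCylinders (fun _ => MeasurableSpace.isPiSystem_measurableSet)
      (fun _ => by simp)) ?_ (by simp)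
  rintro s ⟨u, t, htC, rfl⟩
  have ht : ∀ i, MeasurableSet (t i) := fun i => htC i (Set.mem_univ i)
  have hsm : MeasurableSet ((u : Set ℕ).pi t) :=
    MeasurableSet.pi (Set.to_countable _) (fun i _ => ht i)
  rw [Measure.map_apply hZ hsm, Measure.map_apply hW hsm]
  have hZp : (fun ω (n : ℕ) => X (n + 1) ω) ⁻¹' ((u : Set ℕ).pi t)
      = ⋂ i ∈ u, X (i + 1) ⁻¹' t i := by
    ext ω; simp [Set.mem_pi]
  have hWp : (fun ω (n : ℕ) => X n ω) ⁻¹' ((u : Set ℕ).pi t)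
      = ⋂ i ∈ u, X (i + 0) ⁻¹' t i := by
    ext ω; simp [Set.mem_pi]
  rw [hZp, hWp, box_formula X hindep (fun i => i + 1) (fun a b h => by simpa using h) u t ht,
    box_formula X hindep (fun i => i + 0) (fun a b h => by simpa using h) u t ht]
  refine Finset.prod_congr rfl (fun i _ => ?_)
  have hmapeq : Measure.map (X (i + 1)) ℙ = Measure.map (X (i + 0)) ℙ :=
    (hident (i + 1)).map_eq.trans (hident (i + 0)).map_eq.symm
  rw [← Measure.map_apply (hmeas _) (ht i), ← Measure.map_apply (hmeas _) (ht i), hmapeq]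

lemma indep_head_shift {Ω : Type*} [MeasureSpace Ω]
    (X : ℕ → Ω → ℝ × ℝ)
    (hmeas : ∀ n, Measurable (X n))
    (hindep : iIndepFun X ℙ) :
    IndepFun (X 0) (fun ω (n : ℕ) => X (n + 1) ω) ℙ := by
  rw [IndepFun_iff_Indep]
  have h0 := indep_biSup_compl (fun n => (hmeas n).comap_le) hindep.iIndep ({0} : Set ℕ)
  refine indep_mono h0 ?_ ?_
  · exact le_iSup₂ (f := fun n (_ : n ∈ ({0} : Set ℕ)) =>
      MeasurableSpace.comap (X n) inferInstance) 0 rfl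
  · have hcomap : MeasurableSpace.comap (fun ω (n : ℕ) => X (n + 1) ω)
        (MeasurableSpace.pi (m := fun _ : ℕ => (inferInstance : MeasurableSpace (ℝ × ℝ))))
        = ⨆ n : ℕ, MeasurableSpace.comap (X (n + 1)) inferInstance := by
      rw [MeasurableSpace.pi, MeasurableSpace.comap_iSup]
      exact iSup_congr (fun n => by rw [MeasurableSpace.comap_comp]; rfl)
    refine le_trans (le_of_eq hcomap) (iSup_le (fun n => ?_))
    exact le_iSup₂ (f := fun k (_ : k ∈ (({0} : Set ℕ))ᶜ) =>
      MeasurableSpace.comap (X k) inferInstance) (n + 1) (by simp)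

end HQAux

namespace HQAux

noncomputable def Fint {Ω : Type*} [MeasureSpace Ω] (X : ℕ → Ω → ℝ × ℝ) (y : ℝ × ℝ) : ℝ :=
  ∫ ω, Set.indicator {ω | exitTimeQuadrant X y ω ≠ ⊤}
    (fun ω => y.1 + (partialSum2 X (exitTimeQuadrant X y ω).toNat ω).1) ω ∂ℙ

example {Ω : Type*} (X : ℕ → Ω → ℝ × ℝ) (y : ℝ × ℝ) (ω : Ω) :
    exitTimeQuadrant cX y (fun n => X n ω) = exitTimeQuadrant X y ω := rfl

example {Ω : Type*} (X : ℕ → Ω → ℝ × ℝ) (y : ℝ × ℝ) (ω : Ω) (k : ℕ) :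
    partialSum2 cX k (fun n => X n ω) = partialSum2 X k ω := rfl

example {Ω : Type*} (X : ℕ → Ω → ℝ × ℝ) (y : ℝ × ℝ) (ω : Ω) :
    exitTimeQuadrant cX y (fun n => X (n + 1) ω)
      = exitTimeQuadrant (fun n => X (n + 1)) y ω := rfl

end HQAux

namespace HQAux

lemma Phi_eval_W {Ω : Type*} (X : ℕ → Ω → ℝ × ℝ) (x a : ℝ × ℝ) (ω : Ω) :
    Phi x (a, fun n => X n ω)
      = if (0 < x.1 + a.1 ∧ 0 < x.2 + a.2) then
          Set.indicator {ω : Ω | exitTimeQuadrant X (x + a) ω ≠ ⊤}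
            (fun ω => (x + a).1
              + (partialSum2 X (exitTimeQuadrant X (x + a) ω).toNat ω).1) ω
        else 0 := rfl

lemma Phi_eval_Z {Ω : Type*} (X : ℕ → Ω → ℝ × ℝ) (x a : ℝ × ℝ) (ω : Ω) :
    Phi x (a, fun n => X (n + 1) ω)
      = if (0 < x.1 + a.1 ∧ 0 < x.2 + a.2) then
          Set.indicator {ω : Ω | exitTimeQuadrant (fun n => X (n + 1)) (x + a) ω ≠ ⊤}
            (fun ω => (x + a).1
              + (partialSum2 (fun n => X (n + 1))
                  (exitTimeQuadrant (fun n => X (n + 1)) (x + a) ω).toNat ω).1) ω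
        else 0 := rfl

end HQAux

/-- `h(x) = x₁ − E[(x₁ + S₁(τ_x)); τ_x < ∞]`. -/
noncomputable def hQ {Ω : Type*} [MeasureSpace Ω] (X : ℕ → Ω → ℝ × ℝ) (x : ℝ × ℝ) : ℝ :=
  x.1 - ∫ ω, Set.indicator {ω | exitTimeQuadrant X x ω ≠ ⊤}
    (fun ω => x.1 + (partialSum2 X (exitTimeQuadrant X x ω).toNat ω).1) ω ∂ℙ

/-- in the mixed-drift setting, `h` is harmonic for the 2-dimensional walk
killed upon exiting the quadrant: `h(x) = E[h(x + S(1)); τ_x > 1]`. -/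
theorem hQ_harmonic
    {Ω : Type*} [MeasureSpace Ω] [IsProbabilityMeasure (ℙ : Measure Ω)]
    (X : ℕ → Ω → ℝ × ℝ) (X0 : Ω → ℝ × ℝ) (δ : ℝ) (hδ : 0 < δ)
    (hmeas : ∀ n, Measurable (X n))
    (hindep : iIndepFun X ℙ)
    (hident : ∀ n, IdentDistrib (X n) X0 ℙ ℙ)
    (hcent1 : ∫ ω, (X0 ω).1 ∂ℙ = 0)
    (hmom1 : Integrable (fun ω => |(X0 ω).1| ^ (2 + δ)) ℙ)
    (hsq2 : Integrable (fun ω => (X0 ω).2 ^ 2) ℙ)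
    (hdrift2 : 0 < ∫ ω, (X0 ω).2 ∂ℙ)
    (hmom2 : Integrable (fun ω => max (-(X0 ω).2) 0 ^ (3 + δ)) ℙ)
    (hfin : ∀ x : ℝ × ℝ, 0 < x.1 → 0 < x.2 →
      Integrable (Set.indicator {ω | exitTimeQuadrant X x ω ≠ ⊤}
        (fun ω => x.1 + (partialSum2 X (exitTimeQuadrant X x ω).toNat ω).1)) ℙ)
    (x : ℝ × ℝ) (hx1 : 0 < x.1) (hx2 : 0 < x.2) :
    hQ X x = ∫ ω, Set.indicator {ω | 1 < exitTimeQuadrant X x ω}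
      (fun ω => hQ X (x + partialSum2 X 1 ω)) ω ∂ℙ := by
  classical
  have hZ : Measurable (fun ω (n : ℕ) => X (n + 1) ω) :=
    measurable_pi_lambda _ (fun n => hmeas (n + 1))
  have hW : Measurable (fun ω (n : ℕ) => X n ω) :=
    measurable_pi_lambda _ (fun n => hmeas n)
  have hlaw : Measure.map (fun ω (n : ℕ) => X (n + 1) ω) ℙ
      = Measure.map (fun ω (n : ℕ) => X n ω) ℙ :=
    HQAux.map_shift_eq X X0 hmeas hindep hident
  have hYZ : IndepFun (X 0) (fun ω (n : ℕ) => X (n + 1) ω) ℙ :=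
    HQAux.indep_head_shift X hmeas hindep
  haveI hP0 : IsProbabilityMeasure (Measure.map (X 0) ℙ) :=
    Measure.isProbabilityMeasure_map (hmeas 0).aemeasurable
  haveI hPZ : IsProbabilityMeasure (Measure.map (fun ω (n : ℕ) => X (n + 1) ω) ℙ) :=
    Measure.isProbabilityMeasure_map hZ.aemeasurable
  have hpair : Measure.map (fun ω => (X 0 ω, fun n => X (n + 1) ω)) ℙ
      = (Measure.map (X 0) ℙ).prod (Measure.map (fun ω (n : ℕ) => X (n + 1) ω) ℙ) :=
    (indepFun_iff_map_prod_eq_prod_map_map (hmeas 0).aemeasurable hZ.aemeasurable).1 hYZ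
  have hpairmeas : Measurable (fun ω => (X 0 ω, fun n => X (n + 1) ω)) :=
    (hmeas 0).prodMk hZ
  set Q : Set Ω := {ω | 1 < exitTimeQuadrant X x ω} with hQdef
  have hQiff : ∀ ω, ω ∈ Q ↔ (0 < x.1 + (X 0 ω).1 ∧ 0 < x.2 + (X 0 ω).2) :=
    fun ω => HQAux.one_lt_exit_iff X x ω
  have hQmeas : MeasurableSet Q := by
    have hqq : Q = (X 0) ⁻¹' ({a : ℝ × ℝ | 0 < x.1 + a.1} ∩ {a : ℝ × ℝ | 0 < x.2 + a.2}) := by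
      ext ω
      rw [hQiff ω]
      simp [Set.mem_inter_iff]
    rw [hqq]
    exact hmeas 0 ((measurableSet_lt measurable_const (measurable_const.add measurable_fst)).inter
      (measurableSet_lt measurable_const (measurable_const.add measurable_snd)))
  set Ifun : Ω → ℝ := Set.indicator {ω | exitTimeQuadrant X x ω ≠ ⊤}
    (fun ω => x.1 + (partialSum2 X (exitTimeQuadrant X x ω).toNat ω).1) with hIdef
  have hIint : Integrable Ifun ℙ := hfin x hx1 hx2
  set c1 : Ω → ℝ := fun ω => x.1 + (X 0 ω).1 with hc1def
  have hid1 : IdentDistrib (fun ω => (X 0 ω).1) (fun ω => (X0 ω).1) ℙ ℙ :=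
    (hident 0).comp measurable_fst
  have hX0int : Integrable (fun ω => (X 0 ω).1) ℙ := by
    rw [hid1.integrable_iff]
    have haesm : AEStronglyMeasurable (fun ω => (X0 ω).1) ℙ :=
      (measurable_fst.comp_aemeasurable (hident 0).aemeasurable_snd).aestronglyMeasurable
    refine Integrable.mono ((integrable_const (1 : ℝ)).add hmom1) haesm ?_
    filter_upwards with ω
    have h0 : (0 : ℝ) ≤ |(X0 ω).1| ^ (2 + δ) := Real.rpow_nonneg (abs_nonneg _) _
    simp only [Pi.add_apply, Real.norm_eq_abs]
    rw [abs_of_nonneg (by linarith : (0:ℝ) ≤ 1 + |(X0 ω).1| ^ (2 + δ))]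
    by_cases hle : |(X0 ω).1| ≤ 1
    · linarith
    · have h1 : (1 : ℝ) ≤ |(X0 ω).1| := le_of_not_ge hle
      have h2 : |(X0 ω).1| ^ (1 : ℝ) ≤ |(X0 ω).1| ^ (2 + δ) :=
        Real.rpow_le_rpow_of_exponent_le h1 (by linarith)
      rw [Real.rpow_one] at h2
      linarith
  have hc1int : Integrable c1 ℙ := (integrable_const x.1).add hX0int
  have hc1mean : ∫ ω, c1 ω ∂ℙ = x.1 := by
    rw [hc1def]
    rw [integral_add (integrable_const _) hX0int, integral_const, hid1.integral_eq, hcent1]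
    simp
  -- pointwise identity: indicator Q Ifun = Phi ∘ pair
  have hA1 : ∀ ω, Set.indicator Q Ifun ω = HQAux.Phi x (X 0 ω, fun n => X (n + 1) ω) := by
    intro ω
    rw [HQAux.Phi_eval_Z]
    by_cases h : ω ∈ Q
    · have hpos := (hQiff ω).1 h
      rw [Set.indicator_of_mem h, if_pos hpos]
      have hshift := HQAux.exit_shift X x ω hpos
      rcases eq_top_or_lt_top (exitTimeQuadrant (fun n => X (n + 1)) (x + X 0 ω) ω)
        with htop | hlt
      · have hτ : exitTimeQuadrant X x ω = ⊤ := by rw [hshift, htop]; simp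
        rw [hIdef, Set.indicator_of_notMem (by simp [hτ]),
          Set.indicator_of_notMem (by simp [htop])]
      · obtain ⟨m, hm0⟩ := WithTop.ne_top_iff_exists.1 hlt.ne
        have hm : exitTimeQuadrant (fun n => X (n + 1)) (x + X 0 ω) ω = (m : ℕ∞) := hm0.symm
        have hτ : exitTimeQuadrant X x ω = ((m + 1 : ℕ) : ℕ∞) := by
          rw [hshift, hm]
          push_cast
          exact (add_comm _ _)
        rw [hIdef, Set.indicator_of_mem (show ω ∈ {ω | exitTimeQuadrant X x ω ≠ ⊤} by
            rw [Set.mem_setOf_eq, hτ]; exact ENat.coe_ne_top _),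
          Set.indicator_of_mem (show ω ∈ {ω' : Ω |
            exitTimeQuadrant (fun n => X (n + 1)) (x + X 0 ω) ω' ≠ ⊤} from hlt.ne)]
        rw [hτ, hm, ENat.toNat_coe, ENat.toNat_coe, HQAux.partialSum2_succ]
        simp [Prod.fst_add, add_assoc]
    · have hpos : ¬ (0 < x.1 + (X 0 ω).1 ∧ 0 < x.2 + (X 0 ω).2) :=
        fun hp => h ((hQiff ω).2 hp)
      rw [Set.indicator_of_notMem h, if_neg hpos]
  have hPhiSM : StronglyMeasurable (HQAux.Phi x) := (HQAux.measurable_Phi x).stronglyMeasurable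
  have hcompInt : Integrable (fun ω => HQAux.Phi x (X 0 ω, fun n => X (n + 1) ω)) ℙ := by
    have : (fun ω => HQAux.Phi x (X 0 ω, fun n => X (n + 1) ω)) = Set.indicator Q Ifun := by
      funext ω; rw [hA1 ω]
    rw [this]
    exact hIint.indicator hQmeas
  set J : ℝ := ∫ ω, Set.indicator Q Ifun ω ∂ℙ with hJdef
  have hPhiInt : Integrable (HQAux.Phi x)
      ((Measure.map (X 0) ℙ).prod (Measure.map (fun ω (n : ℕ) => X (n + 1) ω) ℙ)) := by
    rw [← hpair, integrable_map_measure hPhiSM.aestronglyMeasurable hpairmeas.aemeasurable]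
    exact hcompInt
  have hinner : ∀ a : ℝ × ℝ,
      (∫ z, HQAux.Phi x (a, z) ∂(Measure.map (fun ω (n : ℕ) => X (n + 1) ω) ℙ))
        = if (0 < x.1 + a.1 ∧ 0 < x.2 + a.2) then HQAux.Fint X (x + a) else 0 := by
    intro a
    have hmap := integral_map (μ := ℙ) (φ := fun ω (n : ℕ) => X n ω)
      (f := fun z => HQAux.Phi x (a, z)) hW.aemeasurable
      ((hPhiSM.comp_measurable measurable_prodMk_left).aestronglyMeasurable)
    rw [hlaw, hmap]
    by_cases hpos : (0 < x.1 + a.1 ∧ 0 < x.2 + a.2)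
    · rw [if_pos hpos]
      have heq : ∀ ω, HQAux.Phi x (a, fun n => X n ω)
          = Set.indicator {ω : Ω | exitTimeQuadrant X (x + a) ω ≠ ⊤}
            (fun ω => (x + a).1
              + (partialSum2 X (exitTimeQuadrant X (x + a) ω).toNat ω).1) ω := by
        intro ω
        rw [HQAux.Phi_eval_W, if_pos hpos]
      simp_rw [heq]
      rfl
    · rw [if_neg hpos]
      have heq : ∀ ω, HQAux.Phi x (a, fun n => X n ω) = 0 := by
        intro ω
        rw [HQAux.Phi_eval_W, if_neg hpos]
      simp_rw [heq]
      exact integral_zero Ω ℝ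
  have hg_sm : StronglyMeasurable (fun a : ℝ × ℝ =>
      if (0 < x.1 + a.1 ∧ 0 < x.2 + a.2) then HQAux.Fint X (x + a) else 0) := by
    have h1 : StronglyMeasurable (fun a : ℝ × ℝ =>
        ∫ z, HQAux.Phi x (a, z) ∂(Measure.map (fun ω (n : ℕ) => X (n + 1) ω) ℙ)) :=
      hPhiSM.integral_prod_right'
    have h2 : (fun a : ℝ × ℝ =>
        ∫ z, HQAux.Phi x (a, z) ∂(Measure.map (fun ω (n : ℕ) => X (n + 1) ω) ℙ))
        = fun a => if (0 < x.1 + a.1 ∧ 0 < x.2 + a.2) then HQAux.Fint X (x + a) else 0 := by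
      funext a; exact hinner a
    rw [← h2]
    exact h1
  have hgcompint : Integrable (fun ω =>
      if (0 < x.1 + (X 0 ω).1 ∧ 0 < x.2 + (X 0 ω).2) then HQAux.Fint X (x + X 0 ω) else 0) ℙ := by
    have hg1 : Integrable (fun a : ℝ × ℝ =>
        ∫ z, HQAux.Phi x (a, z) ∂(Measure.map (fun ω (n : ℕ) => X (n + 1) ω) ℙ))
        (Measure.map (X 0) ℙ) := hPhiInt.integral_prod_left
    simp_rw [hinner] at hg1
    have := (integrable_map_measure hg_sm.aestronglyMeasurable (hmeas 0).aemeasurable).1 hg1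
    exact this
  have hJg : J = ∫ ω, (if (0 < x.1 + (X 0 ω).1 ∧ 0 < x.2 + (X 0 ω).2)
      then HQAux.Fint X (x + X 0 ω) else 0) ∂ℙ := by
    have e1 : J = ∫ ω, HQAux.Phi x (X 0 ω, fun n => X (n + 1) ω) ∂ℙ := by
      rw [hJdef]
      exact integral_congr_ae (Filter.Eventually.of_forall hA1)
    have e2 : ∫ ω, HQAux.Phi x (X 0 ω, fun n => X (n + 1) ω) ∂ℙ
        = ∫ p, HQAux.Phi x p
            ∂((Measure.map (X 0) ℙ).prod (Measure.map (fun ω (n : ℕ) => X (n + 1) ω) ℙ)) := by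
      rw [← hpair, integral_map hpairmeas.aemeasurable hPhiSM.aestronglyMeasurable]
    have e3 : ∫ p, HQAux.Phi x p
          ∂((Measure.map (X 0) ℙ).prod (Measure.map (fun ω (n : ℕ) => X (n + 1) ω) ℙ))
        = ∫ a, ∫ z, HQAux.Phi x (a, z)
            ∂(Measure.map (fun ω (n : ℕ) => X (n + 1) ω) ℙ) ∂(Measure.map (X 0) ℙ) :=
      integral_prod _ hPhiInt
    have e4 : ∫ a, ∫ z, HQAux.Phi x (a, z)
          ∂(Measure.map (fun ω (n : ℕ) => X (n + 1) ω) ℙ) ∂(Measure.map (X 0) ℙ)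
        = ∫ a, (if (0 < x.1 + a.1 ∧ 0 < x.2 + a.2) then HQAux.Fint X (x + a) else 0)
            ∂(Measure.map (X 0) ℙ) := by
      exact integral_congr_ae (Filter.Eventually.of_forall hinner)
    have e5 : ∫ a, (if (0 < x.1 + a.1 ∧ 0 < x.2 + a.2) then HQAux.Fint X (x + a) else 0)
          ∂(Measure.map (X 0) ℙ)
        = ∫ ω, (if (0 < x.1 + (X 0 ω).1 ∧ 0 < x.2 + (X 0 ω).2)
            then HQAux.Fint X (x + X 0 ω) else 0) ∂ℙ := by
      rw [integral_map (hmeas 0).aemeasurable hg_sm.aestronglyMeasurable]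
    rw [e1, e2, e3, e4, e5]
  set K : ℝ := ∫ ω, Set.indicator Q c1 ω ∂ℙ with hKdef
  -- decomposition of Fint x
  have hdecomp : ∀ ω, Ifun ω = Set.indicator Qᶜ c1 ω + Set.indicator Q Ifun ω := by
    intro ω
    by_cases h : ω ∈ Q
    · rw [Set.indicator_of_notMem (by simp [h] : ω ∉ Qᶜ), Set.indicator_of_mem h, zero_add]
    · rw [Set.indicator_of_mem (Set.mem_compl h), Set.indicator_of_notMem h, add_zero]
      have hτ : exitTimeQuadrant X x ω = 1 := by
        have hle : exitTimeQuadrant X x ω ≤ 1 := not_lt.1 h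
        exact le_antisymm hle (HQAux.one_le_exit X x ω)
      rw [hIdef, Set.indicator_of_mem (by simp [hτ])]
      rw [hτ, hc1def]
      norm_num [partialSum2]
  have hFx : HQAux.Fint X x = (x.1 - K) + J := by
    have h1 : HQAux.Fint X x = ∫ ω, Ifun ω ∂ℙ := rfl
    have h2 : ∫ ω, Ifun ω ∂ℙ
        = ∫ ω, (Set.indicator Qᶜ c1 ω + Set.indicator Q Ifun ω) ∂ℙ :=
      integral_congr_ae (Filter.Eventually.of_forall hdecomp)
    rw [h1, h2, integral_add (hc1int.indicator hQmeas.compl) (hIint.indicator hQmeas)]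
    have h3 : ∫ ω, Set.indicator Qᶜ c1 ω ∂ℙ = x.1 - K := by
      rw [Set.indicator_compl]
      simp only [Pi.sub_apply]
      rw [integral_sub hc1int (hc1int.indicator hQmeas)]
      rw [hc1mean, hKdef]
    rw [h3, hJdef]
  -- final computation
  have hLHS : hQ X x = K - J := by
    have : hQ X x = x.1 - HQAux.Fint X x := rfl
    rw [this, hFx]
    ring
  have hRHSpt : ∀ ω, Set.indicator Q (fun ω => hQ X (x + partialSum2 X 1 ω)) ω
      = Set.indicator Q c1 ω
        - (if (0 < x.1 + (X 0 ω).1 ∧ 0 < x.2 + (X 0 ω).2)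
            then HQAux.Fint X (x + X 0 ω) else 0) := by
    intro ω
    have hS1 : partialSum2 X 1 ω = X 0 ω := by simp [partialSum2]
    by_cases h : ω ∈ Q
    · have hpos := (hQiff ω).1 h
      rw [Set.indicator_of_mem h, Set.indicator_of_mem h, if_pos hpos, hS1]
      have : hQ X (x + X 0 ω) = (x + X 0 ω).1 - HQAux.Fint X (x + X 0 ω) := rfl
      rw [this, hc1def]
      simp [Prod.fst_add]
    · have hpos : ¬ (0 < x.1 + (X 0 ω).1 ∧ 0 < x.2 + (X 0 ω).2) :=
        fun hp => h ((hQiff ω).2 hp)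
      rw [Set.indicator_of_notMem h, Set.indicator_of_notMem h, if_neg hpos]
      ring
  have hRHS : ∫ ω, Set.indicator Q (fun ω => hQ X (x + partialSum2 X 1 ω)) ω ∂ℙ = K - J := by
    have h1 : ∫ ω, Set.indicator Q (fun ω => hQ X (x + partialSum2 X 1 ω)) ω ∂ℙ
        = ∫ ω, (Set.indicator Q c1 ω
            - (if (0 < x.1 + (X 0 ω).1 ∧ 0 < x.2 + (X 0 ω).2)
                then HQAux.Fint X (x + X 0 ω) else 0)) ∂ℙ :=
      integral_congr_ae (Filter.Eventually.of_forall hRHSpt)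
    rw [h1, integral_sub (hc1int.indicator hQmeas) hgcompint, hKdef, ← hJg]
  rw [hLHS]
  exact hRHS.symm
end

section
/- Let X be centered with E[X²] < ∞ and X non-degenerate. Define a, b, m as above and V(x) = x + A·m(x) + R with A = 4/E[(X⁻)²]. Then there exists R > 0 such that V is superharmonic for the random walk killed when exiting (0,∞): E[V(x + S(1)); τ_x > 1] ≤ V(x) for all x ≥ 0. -/
open MeasureTheory ProbabilityTheory Filter Set
open scoped ENNReal NNReal

/-- `a(y) = ∫_y^∞ P[X ≤ −u] du`. -/
noncomputable def aFun {Ω : Type*} [MeasureSpace Ω] (X : Ω → ℝ) (y : ℝ) : ℝ :=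
  ∫ u in Set.Ioi y, (ℙ {ω | X ω ≤ -u}).toReal

/-- `b(x) = ∫_x^∞ a(y) dy`. -/
noncomputable def bFun {Ω : Type*} [MeasureSpace Ω] (X : Ω → ℝ) (x : ℝ) : ℝ :=
  ∫ y in Set.Ioi x, aFun X y

/-- `m(x) = ∫_0^x b(y) dy`. -/
noncomputable def mFun {Ω : Type*} [MeasureSpace Ω] (X : Ω → ℝ) (x : ℝ) : ℝ :=
  ∫ y in (0 : ℝ)..x, bFun X y

section SH

variable {Ω : Type*} [MeasureSpace Ω] [IsProbabilityMeasure (ℙ : Measure Ω)]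
variable {X : Ω → ℝ}

lemma SH.integrable_X (hmeas : Measurable X) (hsq : Integrable (fun ω => X ω ^ 2) ℙ) :
    Integrable X ℙ := by
  refine (hsq.add (integrable_const 1)).mono' hmeas.aestronglyMeasurable ?_
  filter_upwards with ω
  have : |X ω| ≤ X ω ^ 2 + 1 := by nlinarith [abs_nonneg (X ω), sq_abs (X ω)]
  simpa using this

lemma SH.integrable_negpart (hmeas : Measurable X) (hsq : Integrable (fun ω => X ω ^ 2) ℙ)
    (x : ℝ) : Integrable (fun ω => max (-x - X ω) 0) ℙ := by
  have hX := SH.integrable_X hmeas hsq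
  refine ((integrable_const |x|).add hX.abs).mono'
    (((measurable_const.sub hmeas).max measurable_const).aestronglyMeasurable) ?_
  filter_upwards with ω
  have h1 : max (-x - X ω) 0 ≤ |x| + |X ω| := by
    apply max_le _ (by positivity)
    have := abs_le.mp (le_refl |x|)
    cases' abs_cases x with h h <;> cases' abs_cases (X ω) with h2 h2 <;> linarith [h.1, h2.1]
  have h0 : (0:ℝ) ≤ max (-x - X ω) 0 := le_max_right _ _
  simpa [abs_of_nonneg h0] using h1

lemma SH.integrable_negpart_sq (hmeas : Measurable X) (hsq : Integrable (fun ω => X ω ^ 2) ℙ)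
    (x : ℝ) : Integrable (fun ω => max (-x - X ω) 0 ^ 2) ℙ := by
  have hX := SH.integrable_X hmeas hsq
  refine ((integrable_const (x^2)).add ((hX.abs.const_mul (2*|x|)).add hsq)).mono'
    ((((measurable_const.sub hmeas).max measurable_const).pow_const 2).aestronglyMeasurable) ?_
  filter_upwards with ω
  have h0 : (0:ℝ) ≤ max (-x - X ω) 0 := le_max_right _ _
  have h1 : max (-x - X ω) 0 ≤ |x| + |X ω| := by
    apply max_le _ (by positivity)
    cases' abs_cases x with h h <;> cases' abs_cases (X ω) with h2 h2 <;> linarith [h.1, h2.1]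
  have : max (-x - X ω) 0 ^ 2 ≤ x^2 + (2*|x| * |X ω| + X ω ^2) := by
    nlinarith [abs_nonneg x, abs_nonneg (X ω), sq_abs x, sq_abs (X ω)]
  simpa [abs_of_nonneg (by positivity : (0:ℝ) ≤ max (-x - X ω) 0 ^ 2)] using this

/-- Layer-cake identity for `aFun`. -/
lemma SH.aFun_eq (hmeas : Measurable X) (hsq : Integrable (fun ω => X ω ^ 2) ℙ) (x : ℝ) :
    aFun X x = ∫ ω, max (-x - X ω) 0 ∂ℙ := by
  have hint := SH.integrable_negpart hmeas hsq x
  rw [hint.integral_eq_integral_meas_le (Eventually.of_forall fun ω => le_max_right _ _)]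
  have h1 : ∀ t ∈ Ioi (0:ℝ),
      (ℙ {a | t ≤ max (-x - X a) 0}).toReal = (ℙ {ω | X ω ≤ -(t + x)}).toReal := by
    intro t ht
    have ht' : (0:ℝ) < t := ht
    have hset : {a | t ≤ max (-x - X a) 0} = {ω : Ω | X ω ≤ -(t + x)} := by
      ext ω
      simp only [Set.mem_setOf_eq, le_max_iff]
      constructor
      · rintro (h' | h') <;> linarith
      · intro h; left; linarith
    rw [hset]
  simp_rw [measureReal_def]
  rw [setIntegral_congr_fun measurableSet_Ioi h1]
  unfold aFun
  have hmp : MeasurePreserving (fun t : ℝ => t + x) volume volume :=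
    measurePreserving_add_right volume x
  have hemb : MeasurableEmbedding (fun t : ℝ => t + x) :=
    (MeasurableEquiv.addRight x).measurableEmbedding
  have key := hmp.setIntegral_preimage_emb hemb
    (fun u => (ℙ {ω | X ω ≤ -u}).toReal) (Ioi x)
  have hpre : (fun t : ℝ => t + x) ⁻¹' Ioi x = Ioi 0 := by
    ext t; simp [Set.mem_Ioi]
  rw [hpre] at key
  rw [← key]

lemma SH.aFun_nonneg (hmeas : Measurable X) (hsq : Integrable (fun ω => X ω ^ 2) ℙ) (y : ℝ) :
    0 ≤ aFun X y := by
  rw [SH.aFun_eq hmeas hsq y]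
  exact integral_nonneg fun ω => le_max_right _ _

lemma SH.aFun_anti (hmeas : Measurable X) (hsq : Integrable (fun ω => X ω ^ 2) ℙ) :
    Antitone (aFun X) := by
  intro y1 y2 h
  rw [SH.aFun_eq hmeas hsq y1, SH.aFun_eq hmeas hsq y2]
  exact integral_mono (SH.integrable_negpart hmeas hsq y2) (SH.integrable_negpart hmeas hsq y1)
    fun ω => max_le_max (by linarith) le_rfl

lemma SH.inner_integrable (x c : ℝ) :
    IntegrableOn (fun y => max (-y - c) 0) (Ioi x) volume := by
  rcases le_or_gt (-c) x with h | h
  · have h0 : EqOn (fun y : ℝ => (0:ℝ)) (fun y => max (-y - c) 0) (Ioi x) := by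
      intro y hy
      simp only
      rw [max_eq_right (by simp only [Set.mem_Ioi] at hy; linarith)]
    exact (integrableOn_zero).congr_fun h0 measurableSet_Ioi
  · have hcont : Continuous fun y : ℝ => max (-y - c) 0 :=
      (continuous_neg.sub continuous_const).max continuous_const
    have int1 : IntegrableOn (fun y => max (-y - c) 0) (Ioc x (-c)) volume :=
      hcont.integrableOn_Ioc
    have int2 : IntegrableOn (fun y => max (-y - c) 0) (Ioi (-c)) volume := by
      have h0 : EqOn (fun y : ℝ => (0:ℝ)) (fun y => max (-y - c) 0) (Ioi (-c)) := by
        intro y hy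
        simp only
        rw [max_eq_right (by simp only [Set.mem_Ioi] at hy; linarith)]
      exact (integrableOn_zero).congr_fun h0 measurableSet_Ioi
    have := int1.union int2
    rwa [Ioc_union_Ioi_eq_Ioi h.le] at this

lemma SH.inner_integral (x c : ℝ) :
    ∫ y in Ioi x, max (-y - c) 0 ∂volume = max (-x - c) 0 ^ 2 / 2 := by
  rcases le_or_gt (-c) x with h | h
  · have h0 : ∀ y ∈ Ioi x, max (-y - c) 0 = (0:ℝ) := by
      intro y hy
      rw [max_eq_right (by simp only [Set.mem_Ioi] at hy; linarith)]
    rw [setIntegral_congr_fun measurableSet_Ioi h0]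
    simp [max_eq_right (by linarith : -x - c ≤ (0:ℝ))]
  · have int1 : IntegrableOn (fun y => max (-y - c) 0) (Ioc x (-c)) volume :=
      ((continuous_neg.sub continuous_const).max continuous_const).integrableOn_Ioc
    have int2 : IntegrableOn (fun y => max (-y - c) 0) (Ioi (-c)) volume := by
      have h0 : EqOn (fun y : ℝ => (0:ℝ)) (fun y => max (-y - c) 0) (Ioi (-c)) := by
        intro y hy
        simp only
        rw [max_eq_right (by simp only [Set.mem_Ioi] at hy; linarith)]
      exact (integrableOn_zero).congr_fun h0 measurableSet_Ioi
    rw [← Ioc_union_Ioi_eq_Ioi h.le,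
      setIntegral_union (Ioc_disjoint_Ioi le_rfl) measurableSet_Ioi int1 int2]
    have h2 : ∀ y ∈ Ioi (-c), max (-y - c) 0 = (0:ℝ) := by
      intro y hy
      rw [max_eq_right (by simp only [Set.mem_Ioi] at hy; linarith)]
    rw [setIntegral_congr_fun measurableSet_Ioi h2]
    simp only [integral_zero, add_zero]
    have h1 : ∀ y ∈ Ioc x (-c), max (-y - c) 0 = -y - c := by
      intro y hy
      rw [max_eq_left (by linarith [hy.2] : (0:ℝ) ≤ -y - c)]
    rw [setIntegral_congr_fun measurableSet_Ioc h1,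
      ← intervalIntegral.integral_of_le h.le]
    have : (fun y : ℝ => -y - c) = fun y : ℝ => (-c : ℝ) - y := by funext y; ring
    rw [this]
    rw [intervalIntegral.integral_sub intervalIntegrable_const
      intervalIntegral.intervalIntegrable_id]
    rw [intervalIntegral.integral_const, integral_id]
    rw [max_eq_left (by linarith : (0:ℝ) ≤ -x - c)]
    simp only [smul_eq_mul]
    ring

/-- Fubini identity for `bFun`. -/
lemma SH.bFun_eq (hmeas : Measurable X) (hsq : Integrable (fun ω => X ω ^ 2) ℙ) (x : ℝ) :
    bFun X x = ∫ ω, max (-x - X ω) 0 ^ 2 / 2 ∂ℙ := by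
  have hswap : ∫⁻ y in Ioi x, ENNReal.ofReal (aFun X y) ∂volume
      = ENNReal.ofReal (∫ ω, max (-x - X ω) 0 ^ 2 / 2 ∂ℙ) := by
    have e1 : ∀ y : ℝ, ENNReal.ofReal (aFun X y)
        = ∫⁻ ω, ENNReal.ofReal (max (-y - X ω) 0) ∂ℙ := by
      intro y
      rw [SH.aFun_eq hmeas hsq y,
        ofReal_integral_eq_lintegral_ofReal (SH.integrable_negpart hmeas hsq y)
          (Eventually.of_forall fun ω => le_max_right _ _)]
    simp_rw [e1]
    rw [lintegral_lintegral_swap]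
    · have e2 : ∀ ω : Ω, ∫⁻ y in Ioi x, ENNReal.ofReal (max (-y - X ω) 0) ∂volume
          = ENNReal.ofReal (max (-x - X ω) 0 ^ 2 / 2) := by
        intro ω
        rw [← ofReal_integral_eq_lintegral_ofReal (SH.inner_integrable x (X ω))
          (ae_of_all _ fun y => le_max_right _ _), SH.inner_integral x (X ω)]
      simp_rw [e2]
      rw [← ofReal_integral_eq_lintegral_ofReal ((SH.integrable_negpart_sq hmeas hsq x).div_const 2)
        (ae_of_all _ fun ω => by positivity)]
    · apply Measurable.aemeasurable
      exact ((measurable_fst.neg.sub (hmeas.comp measurable_snd)).max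
        measurable_const).ennreal_ofReal
  have hmeasb : AEStronglyMeasurable (aFun X) (volume.restrict (Ioi x)) :=
    ((SH.aFun_anti hmeas hsq).measurable).aestronglyMeasurable
  have hae : 0 ≤ᵐ[volume.restrict (Ioi x)] aFun X :=
    ae_of_all _ fun y => SH.aFun_nonneg hmeas hsq y
  unfold bFun
  rw [integral_eq_lintegral_of_nonneg_ae hae hmeasb, hswap,
    ENNReal.toReal_ofReal (integral_nonneg fun ω => by positivity)]

lemma SH.bFun_nonneg (hmeas : Measurable X) (hsq : Integrable (fun ω => X ω ^ 2) ℙ) (x : ℝ) :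
    0 ≤ bFun X x := by
  rw [SH.bFun_eq hmeas hsq x]
  exact integral_nonneg fun ω => by positivity

lemma SH.bFun_anti (hmeas : Measurable X) (hsq : Integrable (fun ω => X ω ^ 2) ℙ) :
    Antitone (bFun X) := by
  intro x1 x2 h
  rw [SH.bFun_eq hmeas hsq x1, SH.bFun_eq hmeas hsq x2]
  refine integral_mono ((SH.integrable_negpart_sq hmeas hsq x2).div_const 2)
    ((SH.integrable_negpart_sq hmeas hsq x1).div_const 2) fun ω => ?_
  have h1 : max (-x2 - X ω) 0 ≤ max (-x1 - X ω) 0 := max_le_max (by linarith) le_rfl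
  have h0 : (0:ℝ) ≤ max (-x2 - X ω) 0 := le_max_right _ _
  simp only
  nlinarith

/-- `b u ≥ b x + (x - u) * a x` for `u ≤ x`. -/
lemma SH.bFun_lin_lb (hmeas : Measurable X) (hsq : Integrable (fun ω => X ω ^ 2) ℙ)
    {u x : ℝ} (h : u ≤ x) : bFun X x + (x - u) * aFun X x ≤ bFun X u := by
  rw [SH.bFun_eq hmeas hsq x, SH.bFun_eq hmeas hsq u, SH.aFun_eq hmeas hsq x]
  have key : ∫ ω, (max (-x - X ω) 0 ^ 2 / 2 + (x - u) * max (-x - X ω) 0) ∂ℙ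
      ≤ ∫ ω, max (-u - X ω) 0 ^ 2 / 2 ∂ℙ := by
    refine integral_mono (((SH.integrable_negpart_sq hmeas hsq x).div_const 2).add
      ((SH.integrable_negpart hmeas hsq x).const_mul (x - u)))
      ((SH.integrable_negpart_sq hmeas hsq u).div_const 2) fun ω => ?_
    simp only
    set V := max (-x - X ω) 0 with hV
    set U := max (-u - X ω) 0 with hU
    have hV0 : 0 ≤ V := le_max_right _ _
    have hU0 : 0 ≤ U := le_max_right _ _
    rcases le_or_gt (-x - X ω) 0 with hc | hc
    · have hVeq : V = 0 := max_eq_right hc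
      rw [hVeq]
      nlinarith [sq_nonneg U]
    · have hVeq : V = -x - X ω := max_eq_left hc.le
      have hUeq : U = -u - X ω := max_eq_left (by linarith)
      rw [hVeq, hUeq]
      nlinarith
  rwa [integral_add ((SH.integrable_negpart_sq hmeas hsq x).div_const 2)
    ((SH.integrable_negpart hmeas hsq x).const_mul (x - u)), integral_const_mul] at key

lemma SH.bFun_ii (hmeas : Measurable X) (hsq : Integrable (fun ω => X ω ^ 2) ℙ)
    (s x : ℝ) : IntervalIntegrable (bFun X) volume s x :=
  (SH.bFun_anti hmeas hsq).intervalIntegrable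

lemma SH.mFun_diff (hmeas : Measurable X) (hsq : Integrable (fun ω => X ω ^ 2) ℙ)
    (s x : ℝ) : mFun X x - mFun X s = ∫ y in s..x, bFun X y := by
  have h := intervalIntegral.integral_add_adjacent_intervals
    (SH.bFun_ii hmeas hsq 0 s) (SH.bFun_ii hmeas hsq s x)
  unfold mFun
  linarith

lemma SH.mFun_le_tangent (hmeas : Measurable X) (hsq : Integrable (fun ω => X ω ^ 2) ℙ)
    {x t : ℝ} (ht : 0 ≤ t) : mFun X (x + t) ≤ mFun X x + bFun X x * t := by
  have hd := SH.mFun_diff hmeas hsq x (x + t)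
  have hle : ∫ y in x..(x + t), bFun X y ≤ ∫ _ in x..(x + t), bFun X x := by
    refine intervalIntegral.integral_mono_on (by linarith)
      (SH.bFun_ii hmeas hsq _ _) intervalIntegrable_const
      fun u hu => SH.bFun_anti hmeas hsq hu.1
  rw [intervalIntegral.integral_const, smul_eq_mul] at hle
  have : x + t - x = t := by ring
  rw [this] at hle
  linarith

lemma SH.mFun_ge_quad (hmeas : Measurable X) (hsq : Integrable (fun ω => X ω ^ 2) ℙ)
    {s x : ℝ} (h : s ≤ x) :
    mFun X s + (x - s) * bFun X x + aFun X x * (x - s) ^ 2 / 2 ≤ mFun X x := by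
  have hd := SH.mFun_diff hmeas hsq s x
  have hle : ∫ u in s..x, (bFun X x + (x - u) * aFun X x) ∂volume ≤ ∫ y in s..x, bFun X y := by
    refine intervalIntegral.integral_mono_on h
      (intervalIntegrable_const.add (((continuous_const.sub continuous_id').mul
        continuous_const).intervalIntegrable _ _))
      (SH.bFun_ii hmeas hsq _ _)
      fun u hu => SH.bFun_lin_lb hmeas hsq hu.2
  have hcomp : ∫ u in s..x, (bFun X x + (x - u) * aFun X x) ∂volume
      = (x - s) * bFun X x + aFun X x * (x - s) ^ 2 / 2 := by
    rw [intervalIntegral.integral_add intervalIntegrable_const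
      (show IntervalIntegrable (fun u => (x - u) * aFun X x) volume s x from
        ((continuous_const.sub continuous_id').mul continuous_const).intervalIntegrable _ _)]
    rw [intervalIntegral.integral_const, smul_eq_mul]
    have h2 : ∫ u in s..x, (x - u) * aFun X x ∂volume
        = (∫ u in s..x, (x - u) ∂volume) * aFun X x := by
      rw [← intervalIntegral.integral_mul_const]
    rw [h2]
    have h3 : ∫ u in s..x, (x - u) ∂volume = (x - s) ^ 2 / 2 := by
      rw [intervalIntegral.integral_sub intervalIntegrable_const
        intervalIntegral.intervalIntegrable_id, intervalIntegral.integral_const, integral_id]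
      simp only [smul_eq_mul]
      ring
    rw [h3]
    ring
  linarith

omit [IsProbabilityMeasure (ℙ : Measure Ω)] in
lemma SH.mFun_zero : mFun X (0 : ℝ) = 0 := intervalIntegral.integral_same

lemma SH.mFun_nonneg (hmeas : Measurable X) (hsq : Integrable (fun ω => X ω ^ 2) ℙ)
    {z : ℝ} (hz : 0 ≤ z) : 0 ≤ mFun X z := by
  have := SH.mFun_ge_quad hmeas hsq hz
  rw [SH.mFun_zero] at this
  have h1 := SH.bFun_nonneg hmeas hsq z
  have h2 := SH.aFun_nonneg hmeas hsq z
  nlinarith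

lemma SH.mFun_le_linear (hmeas : Measurable X) (hsq : Integrable (fun ω => X ω ^ 2) ℙ)
    {z : ℝ} (hz : 0 ≤ z) : mFun X z ≤ bFun X 0 * z := by
  have := SH.mFun_le_tangent hmeas hsq (x := 0) (t := z) hz
  rw [SH.mFun_zero, zero_add] at this
  linarith

lemma SH.mComp_monotone (hmeas : Measurable X) (hsq : Integrable (fun ω => X ω ^ 2) ℙ) :
    Monotone (fun z : ℝ => mFun X (max z 0)) := by
  intro z1 z2 h
  simp only
  have hd := SH.mFun_diff hmeas hsq (max z1 0) (max z2 0)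
  have hnn : 0 ≤ ∫ y in (max z1 0)..(max z2 0), bFun X y :=
    intervalIntegral.integral_nonneg (max_le_max h le_rfl)
      fun u _ => SH.bFun_nonneg hmeas hsq u
  linarith

lemma SH.mComp_integrable (hmeas : Measurable X) (hsq : Integrable (fun ω => X ω ^ 2) ℙ)
    (x : ℝ) : Integrable (fun ω => mFun X (max (x + X ω) 0)) ℙ := by
  have hX := SH.integrable_X hmeas hsq
  refine Integrable.mono' ((integrable_const (bFun X 0 * |x|)).add
    (hX.abs.const_mul (bFun X 0)))
    (((SH.mComp_monotone hmeas hsq).measurable).comp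
      (measurable_const.add hmeas)).aestronglyMeasurable ?_
  filter_upwards with ω
  have h0 : (0:ℝ) ≤ max (x + X ω) 0 := le_max_right _ _
  have h1 : 0 ≤ mFun X (max (x + X ω) 0) := SH.mFun_nonneg hmeas hsq h0
  have h2 : mFun X (max (x + X ω) 0) ≤ bFun X 0 * max (x + X ω) 0 :=
    SH.mFun_le_linear hmeas hsq h0
  have h3 : max (x + X ω) 0 ≤ |x| + |X ω| := by
    apply max_le _ (by positivity)
    cases' abs_cases x with h h <;> cases' abs_cases (X ω) with h4 h4 <;> linarith [h.1, h4.1]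
  have hb0 : 0 ≤ bFun X 0 := SH.bFun_nonneg hmeas hsq 0
  rw [Real.norm_eq_abs, abs_of_nonneg h1]
  calc mFun X (max (x + X ω) 0) ≤ bFun X 0 * (|x| + |X ω|) := by nlinarith
    _ = bFun X 0 * |x| + bFun X 0 * |X ω| := by ring

lemma SH.pointwise_P (hmeas : Measurable X) (hsq : Integrable (fun ω => X ω ^ 2) ℙ)
    {x : ℝ} (hx : 0 ≤ x) (t : ℝ) :
    mFun X (max (x + t) 0) ≤ mFun X x + bFun X x * t
      - aFun X x / 2 * min (max (-t) 0) x ^ 2 + bFun X x * max (-x - t) 0 := by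
  rcases le_or_gt 0 t with ht | ht
  · have h1 : max (x + t) 0 = x + t := max_eq_left (by linarith)
    have h2 : max (-t) (0:ℝ) = 0 := max_eq_right (by linarith)
    have h3 : max (-x - t) (0:ℝ) = 0 := max_eq_right (by linarith)
    have hmin : min (0:ℝ) x = 0 := min_eq_left hx
    rw [h1, h2, h3, hmin]
    have := SH.mFun_le_tangent hmeas hsq (x := x) (t := t) ht
    nlinarith
  · rcases le_or_gt (-x) t with ht2 | ht2
    · have h1 : max (x + t) 0 = x + t := max_eq_left (by linarith)
      have h2 : max (-t) (0:ℝ) = -t := max_eq_left (by linarith)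
      have hmin : min (-t) x = -t := min_eq_left (by linarith)
      have h3 : max (-x - t) (0:ℝ) = 0 := max_eq_right (by linarith)
      have hq := SH.mFun_ge_quad hmeas hsq (s := x + t) (x := x) (by linarith)
      rw [h1, h2, h3, hmin]
      nlinarith [hq]
    · have h1 : max (x + t) 0 = 0 := max_eq_right (by linarith)
      have h2 : max (-t) (0:ℝ) = -t := max_eq_left (by linarith)
      have hmin : min (-t) x = x := min_eq_right (by linarith)
      have h3 : max (-x - t) (0:ℝ) = -x - t := max_eq_left (by linarith)
      have hq := SH.mFun_ge_quad hmeas hsq (s := 0) (x := x) hx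
      rw [SH.mFun_zero] at hq
      rw [h1, h2, hmin, h3, SH.mFun_zero]
      nlinarith [hq]

lemma SH.integrable_pospart (hmeas : Measurable X) (hsq : Integrable (fun ω => X ω ^ 2) ℙ)
    (x : ℝ) : Integrable (fun ω => max (x + X ω) 0) ℙ := by
  have hX := SH.integrable_X hmeas hsq
  refine ((integrable_const |x|).add hX.abs).mono'
    (((measurable_const.add hmeas).max measurable_const).aestronglyMeasurable) ?_
  filter_upwards with ω
  have h0 : (0:ℝ) ≤ max (x + X ω) 0 := le_max_right _ _
  have h1 : max (x + X ω) 0 ≤ |x| + |X ω| := by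
    apply max_le _ (by positivity)
    cases' abs_cases x with h h <;> cases' abs_cases (X ω) with h2 h2 <;> linarith [h.1, h2.1]
  simpa [abs_of_nonneg h0] using h1

lemma SH.integrable_minsq (hmeas : Measurable X) {x : ℝ} (hx : 0 ≤ x) :
    Integrable (fun ω => min (max (-X ω) 0) x ^ 2) ℙ := by
  refine (integrable_const (x ^ 2)).mono'
    ((((hmeas.neg.max measurable_const).min measurable_const).pow_const 2).aestronglyMeasurable) ?_
  filter_upwards with ω
  have h0 : (0:ℝ) ≤ min (max (-X ω) 0) x := le_min (le_max_right _ _) hx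
  have h1 : min (max (-X ω) 0) x ≤ x := min_le_right _ _
  rw [Real.norm_eq_abs, abs_of_nonneg (by positivity)]
  nlinarith

lemma SH.I1 (hmeas : Measurable X) (hsq : Integrable (fun ω => X ω ^ 2) ℙ)
    (hcent : ∫ ω, X ω ∂ℙ = 0) (x : ℝ) :
    ∫ ω, max (x + X ω) 0 ∂ℙ = x + aFun X x := by
  have hX := SH.integrable_X hmeas hsq
  have hpt : ∀ ω, max (x + X ω) 0 = (x + X ω) + max (-x - X ω) 0 := fun ω => by
    rcases le_total (x + X ω) 0 with h | h
    · rw [max_eq_right h, max_eq_left (by linarith)]; ring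
    · rw [max_eq_left h, max_eq_right (by linarith)]; ring
  rw [integral_congr_ae (Eventually.of_forall hpt)]
  have hint1 : Integrable (fun a => x + X a) ℙ := by exact (integrable_const x).add hX
  rw [integral_add hint1 (SH.integrable_negpart hmeas hsq x)]
  rw [integral_add (integrable_const x) hX, hcent, integral_const]
  rw [← SH.aFun_eq hmeas hsq x]
  simp [measure_univ]

lemma SH.I2 (hmeas : Measurable X) (hsq : Integrable (fun ω => X ω ^ 2) ℙ)
    (hcent : ∫ ω, X ω ∂ℙ = 0) {x : ℝ} (hx : 0 ≤ x) :
    ∫ ω, mFun X (max (x + X ω) 0) ∂ℙ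
      ≤ mFun X x - aFun X x / 2 * (∫ ω, min (max (-X ω) 0) x ^ 2 ∂ℙ)
        + bFun X x * aFun X x := by
  have hX := SH.integrable_X hmeas hsq
  have hminint := SH.integrable_minsq (X := X) hmeas hx
  have hnp := SH.integrable_negpart hmeas hsq x
  have hRHSint : Integrable (fun ω => mFun X x + bFun X x * X ω
      - aFun X x / 2 * min (max (-X ω) 0) x ^ 2 + bFun X x * max (-x - X ω) 0) ℙ :=
    (((integrable_const _).add (hX.const_mul _)).sub (hminint.const_mul _)).add
      (hnp.const_mul _)
  have hmono := integral_mono (SH.mComp_integrable hmeas hsq x) hRHSint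
    (fun ω => SH.pointwise_P hmeas hsq hx (X ω))
  have hcomp : ∫ ω, (mFun X x + bFun X x * X ω
      - aFun X x / 2 * min (max (-X ω) 0) x ^ 2 + bFun X x * max (-x - X ω) 0) ∂ℙ
      = mFun X x - aFun X x / 2 * (∫ ω, min (max (-X ω) 0) x ^ 2 ∂ℙ)
        + bFun X x * aFun X x := by
    have h1 : Integrable (fun ω => mFun X x + bFun X x * X ω) ℙ := by
      exact (integrable_const _).add (hX.const_mul _)
    have h2 : Integrable
        (fun ω => mFun X x + bFun X x * X ω - aFun X x / 2 * min (max (-X ω) 0) x ^ 2) ℙ := by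
      exact h1.sub (hminint.const_mul _)
    have h3 : Integrable (fun ω => bFun X x * max (-x - X ω) 0) ℙ := by
      exact hnp.const_mul _
    have h4 : Integrable (fun ω => aFun X x / 2 * min (max (-X ω) 0) x ^ 2) ℙ := by
      exact hminint.const_mul _
    rw [integral_add h2 h3, integral_sub h1 h4,
      integral_add (integrable_const _) (by exact hX.const_mul _ :
        Integrable (fun ω => bFun X x * X ω) ℙ),
      integral_const_mul, integral_const_mul, integral_const_mul, hcent, integral_const]
    rw [← SH.aFun_eq hmeas hsq x]
    simp [measure_univ]
  linarith [hmono, le_of_eq hcomp]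

lemma SH.measure_split (hmeas : Measurable X) (x : ℝ) :
    (ℙ {ω | 0 < x + X ω}).toReal = 1 - (ℙ {ω | X ω ≤ -x}).toReal := by
  have hc : {ω | 0 < x + X ω} = {ω | X ω ≤ -x}ᶜ := by
    ext ω
    simp only [Set.mem_setOf_eq, Set.mem_compl_iff, not_le]
    constructor <;> intro h <;> linarith
  have hms : MeasurableSet {ω | X ω ≤ -x} := measurableSet_le hmeas measurable_const
  rw [hc, prob_compl_eq_one_sub hms]
  rw [ENNReal.toReal_sub_of_le prob_le_one ENNReal.one_ne_top, ENNReal.toReal_one]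

lemma SH.sigma_pos (hmeas : Measurable X) (hsq : Integrable (fun ω => X ω ^ 2) ℙ)
    (hcent : ∫ ω, X ω ∂ℙ = 0) (hnondeg : ¬ (X =ᵐ[ℙ] fun _ => (0 : ℝ))) :
    0 < ∫ ω, max (-X ω) 0 ^ 2 ∂ℙ := by
  have hint : Integrable (fun ω => max (-X ω) 0 ^ 2) ℙ := by
    refine hsq.mono' (((hmeas.neg.max measurable_const).pow_const 2).aestronglyMeasurable) ?_
    filter_upwards with ω
    have h0 : (0:ℝ) ≤ max (-X ω) 0 := le_max_right _ _
    have h1 : max (-X ω) 0 ≤ |X ω| := max_le (neg_le_abs _) (abs_nonneg _)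
    rw [Real.norm_eq_abs, abs_of_nonneg (by positivity)]
    nlinarith [sq_abs (X ω)]
  rcases lt_or_ge 0 (∫ ω, max (-X ω) 0 ^ 2 ∂ℙ) with h | h
  · exact h
  · exfalso
    have hz : ∫ ω, max (-X ω) 0 ^ 2 ∂ℙ = 0 :=
      le_antisymm h (integral_nonneg fun ω => by positivity)
    have hae : (fun ω => max (-X ω) 0 ^ 2) =ᵐ[ℙ] 0 :=
      (integral_eq_zero_iff_of_nonneg (fun ω => by positivity) hint).mp hz
    have hXnn : 0 ≤ᵐ[ℙ] X := by
      filter_upwards [hae] with ω hω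
      simp only [Pi.zero_apply] at hω
      have h5 : max (-X ω) 0 = 0 := by nlinarith [le_max_right (-X ω) (0:ℝ)]
      show (0:ℝ) ≤ X ω
      linarith [le_max_left (-X ω) (0:ℝ), h5]
    have hX := SH.integrable_X hmeas hsq
    have : X =ᵐ[ℙ] 0 := (integral_eq_zero_iff_of_nonneg_ae hXnn hX).mp hcent
    exact hnondeg this

end SH

open scoped Topology

/-- Auxiliary function `K(x) = 1 + A b(x) - (A/2) E[min(X⁻,x)²]`. -/
noncomputable def SH.Kf {Ω : Type*} [MeasureSpace Ω] (X : Ω → ℝ) (x : ℝ) : ℝ :=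
  1 + (4 / ∫ ω, max (-X ω) 0 ^ 2 ∂ℙ) * bFun X x
    - (4 / ∫ ω, max (-X ω) 0 ^ 2 ∂ℙ) / 2 * (∫ ω, min (max (-X ω) 0) x ^ 2 ∂ℙ)

section SH2

variable {Ω : Type*} [MeasureSpace Ω] [IsProbabilityMeasure (ℙ : Measure Ω)]
variable {X : Ω → ℝ}

lemma SH.C_mono (hmeas : Measurable X) {x1 x2 : ℝ} (h1 : 0 ≤ x1) (h : x1 ≤ x2) :
    (∫ ω, min (max (-X ω) 0) x1 ^ 2 ∂ℙ) ≤ ∫ ω, min (max (-X ω) 0) x2 ^ 2 ∂ℙ := by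
  refine integral_mono (SH.integrable_minsq hmeas h1) (SH.integrable_minsq hmeas (h1.trans h))
    fun ω => ?_
  have h0 : (0:ℝ) ≤ min (max (-X ω) 0) x1 := le_min (le_max_right _ _) h1
  have h2 : min (max (-X ω) 0) x1 ≤ min (max (-X ω) 0) x2 := min_le_min le_rfl h
  simp only
  nlinarith

lemma SH.Kf_anti (hmeas : Measurable X) (hsq : Integrable (fun ω => X ω ^ 2) ℙ)
    (hσ : 0 < ∫ ω, max (-X ω) 0 ^ 2 ∂ℙ) {x1 x2 : ℝ} (h1 : 0 ≤ x1) (h : x1 ≤ x2) :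
    SH.Kf X x2 ≤ SH.Kf X x1 := by
  have hA : 0 ≤ 4 / ∫ ω, max (-X ω) 0 ^ 2 ∂ℙ := by positivity
  have hb := SH.bFun_anti hmeas hsq h
  have hC := SH.C_mono (X := X) hmeas h1 h
  unfold SH.Kf
  nlinarith

omit [IsProbabilityMeasure (ℙ : Measure Ω)] in
lemma SH.C_zero :
    (∫ ω, min (max (-X ω) 0) (0:ℝ) ^ 2 ∂(ℙ : Measure Ω)) = 0 := by
  have : ∀ ω : Ω, min (max (-X ω) 0) (0:ℝ) ^ 2 = 0 := fun ω => by
    rw [min_eq_right (le_max_right _ _)]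
    norm_num
  simp_rw [this, integral_zero]

omit [IsProbabilityMeasure (ℙ : Measure Ω)] in
lemma SH.Kf_zero :
    SH.Kf X (0:ℝ) = 1 + (4 / ∫ ω, max (-X ω) 0 ^ 2 ∂(ℙ : Measure Ω)) * bFun X 0 := by
  unfold SH.Kf
  rw [SH.C_zero (X := X)]
  ring

lemma SH.tendsto_b (hmeas : Measurable X) (hsq : Integrable (fun ω => X ω ^ 2) ℙ) :
    Tendsto (bFun X) atTop (𝓝 0) := by
  have hsq2 : Integrable (fun ω => X ω ^ 2 / 2) ℙ := hsq.div_const 2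
  have htend : Tendsto (fun x => ∫ ω, max (-x - X ω) 0 ^ 2 / 2 ∂ℙ) atTop
      (𝓝 (∫ ω : Ω, (0:ℝ) ∂ℙ)) := by
    refine tendsto_integral_filter_of_dominated_convergence (fun ω => X ω ^ 2 / 2)
      ?_ ?_ hsq2 ?_
    · filter_upwards with x
      exact (((measurable_const.sub hmeas).max measurable_const).pow_const 2).div_const
        2 |>.aestronglyMeasurable
    · filter_upwards [eventually_ge_atTop (0:ℝ)] with x hx
      filter_upwards with ω
      have h1 : max (-x - X ω) 0 ≤ |X ω| := by
        apply max_le _ (abs_nonneg _)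
        cases' abs_cases (X ω) with h2 h2 <;> linarith [h2.1]
      have h0' : (0:ℝ) ≤ max (-x - X ω) 0 := le_max_right _ _
      rw [Real.norm_eq_abs, abs_of_nonneg (by positivity)]
      nlinarith [sq_abs (X ω)]
    · filter_upwards with ω
      have : ∀ᶠ x : ℝ in atTop, max (-x - X ω) 0 ^ 2 / 2 = 0 := by
        filter_upwards [eventually_ge_atTop (-X ω)] with x hx
        rw [max_eq_right (by linarith)]
        norm_num
      exact Tendsto.congr' (this.mono fun x hx => hx.symm) tendsto_const_nhds
  have := htend.congr fun x => (SH.bFun_eq hmeas hsq x).symm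
  simpa using this

lemma SH.tendsto_C (hmeas : Measurable X) (hsq : Integrable (fun ω => X ω ^ 2) ℙ) :
    Tendsto (fun x => ∫ ω, min (max (-X ω) 0) x ^ 2 ∂ℙ) atTop
      (𝓝 (∫ ω, max (-X ω) 0 ^ 2 ∂ℙ)) := by
  have hsqn : Integrable (fun ω => max (-X ω) 0 ^ 2) ℙ := by
    refine hsq.mono' (((hmeas.neg.max measurable_const).pow_const 2).aestronglyMeasurable) ?_
    filter_upwards with ω
    have h1 : max (-X ω) 0 ≤ |X ω| := max_le (neg_le_abs _) (abs_nonneg _)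
    have h0 : (0:ℝ) ≤ max (-X ω) 0 := le_max_right _ _
    rw [Real.norm_eq_abs, abs_of_nonneg (by positivity)]
    nlinarith [sq_abs (X ω)]
  refine tendsto_integral_filter_of_dominated_convergence (fun ω => max (-X ω) 0 ^ 2)
    ?_ ?_ hsqn ?_
  · filter_upwards with x
    exact ((((hmeas.neg.max measurable_const).min measurable_const).pow_const
      2)).aestronglyMeasurable
  · filter_upwards [eventually_ge_atTop (0:ℝ)] with x hx
    filter_upwards with ω
    have h0 : (0:ℝ) ≤ min (max (-X ω) 0) x := le_min (le_max_right _ _) hx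
    have h1 : min (max (-X ω) 0) x ≤ max (-X ω) 0 := min_le_left _ _
    rw [Real.norm_eq_abs, abs_of_nonneg (by positivity)]
    nlinarith
  · filter_upwards with ω
    have : ∀ᶠ x : ℝ in atTop, min (max (-X ω) 0) x ^ 2 = max (-X ω) 0 ^ 2 := by
      filter_upwards [eventually_ge_atTop (max (-X ω) 0)] with x hx
      rw [min_eq_left hx]
    exact Tendsto.congr' (this.mono fun x hx => hx.symm) tendsto_const_nhds

lemma SH.integrable_neg (hmeas : Measurable X) (hsq : Integrable (fun ω => X ω ^ 2) ℙ) :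
    Integrable (fun ω => max (-X ω) 0) ℙ := by
  refine (SH.integrable_X hmeas hsq).abs.mono'
    ((hmeas.neg.max measurable_const).aestronglyMeasurable) ?_
  filter_upwards with ω
  have h0 : (0:ℝ) ≤ max (-X ω) 0 := le_max_right _ _
  have h1 : max (-X ω) 0 ≤ |X ω| := max_le (neg_le_abs _) (abs_nonneg _)
  simpa [abs_of_nonneg h0] using h1

lemma SH.b_lip (hmeas : Measurable X) (hsq : Integrable (fun ω => X ω ^ 2) ℙ)
    {x xs : ℝ} (hx : 0 ≤ x) (h : x ≤ xs) :
    bFun X x ≤ bFun X xs + (xs - x) * ∫ ω, max (-X ω) 0 ∂ℙ := by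
  rw [SH.bFun_eq hmeas hsq x, SH.bFun_eq hmeas hsq xs]
  have key : ∫ ω, max (-x - X ω) 0 ^ 2 / 2 ∂ℙ
      ≤ ∫ ω, (max (-xs - X ω) 0 ^ 2 / 2 + (xs - x) * max (-X ω) 0) ∂ℙ := by
    refine integral_mono ((SH.integrable_negpart_sq hmeas hsq x).div_const 2)
      (((SH.integrable_negpart_sq hmeas hsq xs).div_const 2).add
        ((SH.integrable_neg hmeas hsq).const_mul _)) fun ω => ?_
    simp only
    set U := max (-x - X ω) 0 with hU
    set V := max (-xs - X ω) 0 with hV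
    set N := max (-X ω) 0 with hN
    have hV0 : 0 ≤ V := le_max_right _ _
    have hVU : V ≤ U := max_le_max (by linarith) le_rfl
    have hUN : U ≤ N := max_le_max (by linarith) le_rfl
    have hN0 : 0 ≤ N := le_max_right _ _
    have hUV : U ≤ V + (xs - x) := by
      apply max_le _ (by linarith)
      have := le_max_left (-xs - X ω) (0:ℝ)
      linarith
    have e1 : (U - V) * (U + V) ≤ (xs - x) * (2 * N) :=
      mul_le_mul (by linarith) (by linarith) (by linarith) (by linarith)
    nlinarith [e1]
  have hadd : ∫ ω, (max (-xs - X ω) 0 ^ 2 / 2 + (xs - x) * max (-X ω) 0) ∂ℙ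
      = (∫ ω, max (-xs - X ω) 0 ^ 2 / 2 ∂ℙ) + (xs - x) * ∫ ω, max (-X ω) 0 ∂ℙ := by
    rw [integral_add ((SH.integrable_negpart_sq hmeas hsq xs).div_const 2)
      ((SH.integrable_neg hmeas hsq).const_mul _), integral_const_mul]
  linarith [key, le_of_eq hadd]

lemma SH.C_lip (hmeas : Measurable X) {x xs : ℝ} (hx : 0 ≤ x) (h : x ≤ xs) :
    (∫ ω, min (max (-X ω) 0) xs ^ 2 ∂ℙ)
      ≤ (∫ ω, min (max (-X ω) 0) x ^ 2 ∂ℙ) + 2 * xs * (xs - x) := by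
  have key : ∫ ω, min (max (-X ω) 0) xs ^ 2 ∂ℙ
      ≤ ∫ ω, (min (max (-X ω) 0) x ^ 2 + 2 * xs * (xs - x)) ∂ℙ := by
    refine integral_mono (SH.integrable_minsq hmeas (hx.trans h))
      ((SH.integrable_minsq hmeas hx).add (integrable_const _)) fun ω => ?_
    simp only
    set N := max (-X ω) 0 with hN
    have hN0 : 0 ≤ N := le_max_right _ _
    have h1 : min N x ≤ min N xs := min_le_min le_rfl h
    have h2 : 0 ≤ min N x := le_min hN0 hx
    have h3 : min N xs ≤ xs := min_le_right _ _
    have h4 : min N xs ≤ min N x + (xs - x) := by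
      rcases le_total N x with h5 | h5
      · have : min N xs ≤ N := min_le_left _ _
        rw [min_eq_left h5]
        linarith
      · rw [min_eq_right h5]
        linarith
    have e1 : (min N xs - min N x) * (min N xs + min N x) ≤ (xs - x) * (2 * xs) :=
      mul_le_mul (by linarith) (by linarith) (by linarith) (by linarith)
    nlinarith [e1]
  have hadd : ∫ ω, (min (max (-X ω) 0) x ^ 2 + 2 * xs * (xs - x)) ∂ℙ
      = (∫ ω, min (max (-X ω) 0) x ^ 2 ∂ℙ) + 2 * xs * (xs - x) := by
    rw [integral_add (SH.integrable_minsq hmeas hx) (integrable_const _), integral_const]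
    simp [measure_univ]
  linarith [key, le_of_eq hadd]

lemma SH.exists_x1 (hmeas : Measurable X) (hsq : Integrable (fun ω => X ω ^ 2) ℙ)
    (hcent : ∫ ω, X ω ∂ℙ = 0) (hnondeg : ¬ (X =ᵐ[ℙ] fun _ => (0 : ℝ))) :
    ∃ x1 : ℝ, 0 ≤ x1 ∧ (ℙ {ω | X ω ≤ -x1}) ≠ 0 ∧ SH.Kf X x1 < 0 := by
  have hσ := SH.sigma_pos hmeas hsq hcent hnondeg
  set σ2 := ∫ ω, max (-X ω) 0 ^ 2 ∂ℙ with hσ2def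
  have hX := SH.integrable_X hmeas hsq
  by_cases hzero : ∃ z : ℝ, 0 ≤ z ∧ (ℙ {ω | X ω ≤ -z}) = 0
  · obtain ⟨z0, hz00, hz0p⟩ := hzero
    set S := {z : ℝ | 0 ≤ z ∧ (ℙ {ω | X ω ≤ -z}) = 0} with hSdef
    have hSne : S.Nonempty := ⟨z0, hz00, hz0p⟩
    have hSbdd : BddBelow S := ⟨0, fun z hz => hz.1⟩
    set xs := sInf S with hxsdef
    have hxs0 : 0 ≤ xs := le_csInf hSne fun z hz => hz.1
    have hup : ∀ z, xs < z → (ℙ {ω | X ω ≤ -z}) = 0 := by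
      intro z hz
      obtain ⟨w, hwS, hwz⟩ := exists_lt_of_csInf_lt hSne hz
      refine measure_mono_null (fun ω hω => ?_) hwS.2
      simp only [Set.mem_setOf_eq] at hω ⊢
      linarith
    have hlt : (ℙ {ω | X ω < -xs}) = 0 := by
      have hU : {ω | X ω < -xs} = ⋃ n : ℕ, {ω | X ω ≤ -(xs + 1/(n+1))} := by
        ext ω
        simp only [Set.mem_setOf_eq, Set.mem_iUnion]
        constructor
        · intro h
          obtain ⟨n, hn⟩ := exists_nat_one_div_lt (show 0 < -xs - X ω by linarith)
          exact ⟨n, by push_cast at hn ⊢; linarith⟩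
        · rintro ⟨n, hn⟩
          have hpos : (0:ℝ) < 1/((n:ℝ)+1) := by positivity
          push_cast at hn
          linarith
      rw [hU]
      refine measure_iUnion_null fun n => hup _ ?_
      have hpos : (0:ℝ) < 1/((n:ℝ)+1) := by positivity
      push_cast
      linarith
    have haege : ∀ᵐ ω ∂ℙ, ¬ (X ω < -xs) := measure_eq_zero_iff_ae_notMem.mp hlt
    have hxspos : 0 < xs := by
      rcases hxs0.lt_or_eq with hpos | heq
      · exact hpos
      · exfalso
        have hXnn : 0 ≤ᵐ[ℙ] X := by
          filter_upwards [haege] with ω hω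
          have := not_lt.mp hω
          rw [← heq] at this
          simpa using this
        exact hnondeg ((integral_eq_zero_iff_of_nonneg_ae hXnn hX).mp hcent)
    have hbxs : bFun X xs = 0 := by
      rw [SH.bFun_eq hmeas hsq xs]
      have hae : (fun ω => max (-xs - X ω) 0 ^ 2 / 2) =ᵐ[ℙ] 0 := by
        filter_upwards [haege] with ω hω
        have := not_lt.mp hω
        rw [max_eq_right (by linarith)]
        norm_num
      rw [integral_congr_ae hae]
      simp
    have hCxs : (∫ ω, min (max (-X ω) 0) xs ^ 2 ∂ℙ) = σ2 := by
      refine integral_congr_ae ?_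
      filter_upwards [haege] with ω hω
      have hge := not_lt.mp hω
      have : max (-X ω) 0 ≤ xs := max_le (by linarith) hxs0
      rw [min_eq_left this]
    set A := 4 / σ2 with hAdef
    have hA : 0 < A := by positivity
    have hAσ : A * σ2 = 4 := div_mul_cancel₀ _ hσ.ne'
    set ν := ∫ ω, max (-X ω) 0 ∂ℙ with hνdef
    have hν : 0 ≤ ν := integral_nonneg fun ω => le_max_right _ _
    set L := A * ν + A * xs with hLdef
    have hL : 0 ≤ L := add_nonneg (mul_nonneg hA.le hν) (mul_nonneg hA.le hxspos.le)
    set δ := min xs (1/(L+1)) with hδdef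
    have hδpos : 0 < δ := lt_min hxspos (by positivity)
    have hδxs : δ ≤ xs := min_le_left _ _
    have hδL : δ ≤ 1/(L+1) := min_le_right _ _
    have hδL1 : δ * (L + 1) ≤ 1 := by
      have := (le_div_iff₀ (show (0:ℝ) < L + 1 by linarith)).mp hδL
      linarith
    refine ⟨xs - δ, by linarith, ?_, ?_⟩
    · intro hc
      have hmem : xs - δ ∈ S := ⟨by linarith, hc⟩
      have := csInf_le hSbdd hmem
      rw [← hxsdef] at this
      linarith
    · have hb := SH.b_lip hmeas hsq (show (0:ℝ) ≤ xs - δ by linarith)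
        (show xs - δ ≤ xs by linarith)
      have hC := SH.C_lip hmeas (X := X) (show (0:ℝ) ≤ xs - δ by linarith)
        (show xs - δ ≤ xs by linarith)
      rw [hbxs] at hb
      rw [hCxs] at hC
      unfold SH.Kf
      rw [← hσ2def, ← hAdef]
      have hsub : xs - (xs - δ) = δ := by ring
      rw [hsub] at hb hC
      rw [← hνdef] at hb
      rw [hLdef] at hδL1
      have hb' : A * bFun X (xs - δ) ≤ A * (0 + δ * ν) :=
        mul_le_mul_of_nonneg_left hb hA.le
      have hC' : A / 2 * (σ2 - 2 * xs * δ) ≤ A / 2 * (∫ ω, min (max (-X ω) 0) (xs - δ) ^ 2 ∂ℙ) :=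
        mul_le_mul_of_nonneg_left (by linarith) (by positivity)
      nlinarith [hb', hC', hAσ, hδpos]
  · push_neg at hzero
    have hKt : Tendsto (SH.Kf X) atTop (𝓝 (1 + (4/σ2) * 0 - (4/σ2)/2 * σ2)) := by
      unfold SH.Kf
      rw [← hσ2def]
      exact (tendsto_const_nhds.add
        (tendsto_const_nhds.mul (SH.tendsto_b hmeas hsq))).sub
        (tendsto_const_nhds.mul (SH.tendsto_C hmeas hsq))
    have hval : 1 + (4/σ2) * 0 - (4/σ2)/2 * σ2 = -1 := by
      have h4 : (4/σ2) * σ2 = 4 := div_mul_cancel₀ _ hσ.ne'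
      nlinarith [h4]
    rw [hval] at hKt
    have hev : ∀ᶠ x in atTop, SH.Kf X x < 0 := hKt.eventually_lt_const (by norm_num)
    obtain ⟨x1, hx1K, hx10⟩ := (hev.and (eventually_ge_atTop (0:ℝ))).exists
    exact ⟨x1, hx10, hzero x1 hx10, hx1K⟩

lemma SH.key_bound (hmeas : Measurable X) (hsq : Integrable (fun ω => X ω ^ 2) ℙ)
    (hcent : ∫ ω, X ω ∂ℙ = 0) (hnondeg : ¬ (X =ᵐ[ℙ] fun _ => (0 : ℝ))) :
    ∃ R : ℝ, 0 < R ∧ ∀ x : ℝ, 0 ≤ x →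
      aFun X x * SH.Kf X x ≤ R * (ℙ {ω | X ω ≤ -x}).toReal := by
  obtain ⟨x1, hx10, hp1, hK1⟩ := SH.exists_x1 hmeas hsq hcent hnondeg
  have hσ := SH.sigma_pos hmeas hsq hcent hnondeg
  have hp1pos : 0 < (ℙ {ω | X ω ≤ -x1}).toReal :=
    ENNReal.toReal_pos hp1 (measure_ne_top _ _)
  set K0 := 1 + (4 / ∫ ω, max (-X ω) 0 ^ 2 ∂ℙ) * bFun X 0 with hK0
  have hb0 := SH.bFun_nonneg hmeas hsq 0
  have hK0nn : 0 ≤ K0 := by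
    rw [hK0]
    have hA : 0 ≤ 4 / ∫ ω, max (-X ω) 0 ^ 2 ∂ℙ := by positivity
    nlinarith [mul_nonneg hA hb0]
  set R := max 1 ((aFun X 0 * K0) / (ℙ {ω | X ω ≤ -x1}).toReal) with hR
  have hRpos : 0 < R := lt_of_lt_of_le zero_lt_one (le_max_left _ _)
  refine ⟨R, hRpos, fun x hx => ?_⟩
  have hax := SH.aFun_nonneg hmeas hsq x
  have hpnn : 0 ≤ (ℙ {ω | X ω ≤ -x}).toReal := ENNReal.toReal_nonneg
  rcases le_or_gt x x1 with hcase | hcase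
  · rcases le_or_gt (SH.Kf X x) 0 with hKn | hKp
    · nlinarith [mul_nonneg hax (neg_nonneg.mpr hKn), mul_nonneg hRpos.le hpnn]
    · have hK0' : SH.Kf X x ≤ K0 := by
        have h1 := SH.Kf_anti hmeas hsq hσ le_rfl hx
        rw [SH.Kf_zero (X := X)] at h1
        exact h1
      have ha0 : aFun X x ≤ aFun X 0 := SH.aFun_anti hmeas hsq hx
      have ha0nn := SH.aFun_nonneg hmeas hsq 0
      have hprod : aFun X x * SH.Kf X x ≤ aFun X 0 * K0 :=
        mul_le_mul ha0 hK0' hKp.le ha0nn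
      have hpmono : (ℙ {ω | X ω ≤ -x1}).toReal ≤ (ℙ {ω | X ω ≤ -x}).toReal := by
        refine ENNReal.toReal_mono (measure_ne_top _ _) (measure_mono fun ω hω => ?_)
        simp only [Set.mem_setOf_eq] at hω ⊢
        linarith
      have h2 : aFun X 0 * K0 ≤ R * (ℙ {ω | X ω ≤ -x1}).toReal := by
        rw [← div_mul_cancel₀ (aFun X 0 * K0) hp1pos.ne']
        exact mul_le_mul_of_nonneg_right (le_max_right _ _) hp1pos.le
      have h3 : R * (ℙ {ω | X ω ≤ -x1}).toReal ≤ R * (ℙ {ω | X ω ≤ -x}).toReal :=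
        mul_le_mul_of_nonneg_left hpmono hRpos.le
      linarith
  · have hKx : SH.Kf X x ≤ SH.Kf X x1 := SH.Kf_anti hmeas hsq hσ hx10 hcase.le
    nlinarith [mul_nonneg hax (show 0 ≤ -(SH.Kf X x) by linarith),
      mul_nonneg hRpos.le hpnn]

end SH2


/-- with `A = 4/E[(X⁻)²]`, there is `R > 0` such that
`V(x) = x + A·m(x) + R` is superharmonic for the walk killed when exiting `(0,∞)`:
`E[V(x + S(1)); τ_x > 1] ≤ V(x)` for all `x ≥ 0` (note `τ_x > 1 ⇔ x + X > 0`). -/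
theorem exists_R_superharmonic
    {Ω : Type*} [MeasureSpace Ω] [IsProbabilityMeasure (ℙ : Measure Ω)]
    (X : Ω → ℝ) (hmeas : Measurable X)
    (hsq : Integrable (fun ω => X ω ^ 2) ℙ)
    (hcent : ∫ ω, X ω ∂ℙ = 0)
    (hnondeg : ¬ (X =ᵐ[ℙ] fun _ => (0 : ℝ))) :
    ∃ R : ℝ, 0 < R ∧ ∀ x : ℝ, 0 ≤ x →
      (∫ ω, Set.indicator {ω | 0 < x + X ω}
          (fun ω => (x + X ω) + (4 / ∫ ω', max (-X ω') 0 ^ 2 ∂ℙ) * mFun X (x + X ω) + R)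
          ω ∂ℙ) ≤
        x + (4 / ∫ ω', max (-X ω') 0 ^ 2 ∂ℙ) * mFun X x + R := by
  obtain ⟨R, hRpos, hRb⟩ := SH.key_bound hmeas hsq hcent hnondeg
  refine ⟨R, hRpos, fun x hx => ?_⟩
  have hσ := SH.sigma_pos hmeas hsq hcent hnondeg
  set A := 4 / ∫ ω', max (-X ω') 0 ^ 2 ∂(ℙ : Measure Ω) with hA
  have hApos : 0 < A := by rw [hA]; positivity
  have hS : MeasurableSet {ω | 0 < x + X ω} :=
    measurableSet_lt measurable_const (measurable_const.add hmeas)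
  have hpt : ∀ ω, Set.indicator {ω | 0 < x + X ω}
      (fun ω => (x + X ω) + A * mFun X (x + X ω) + R) ω
      = max (x + X ω) 0 + A * mFun X (max (x + X ω) 0)
        + R * Set.indicator {ω | 0 < x + X ω} (fun _ => (1:ℝ)) ω := by
    intro ω
    by_cases h : 0 < x + X ω
    · rw [Set.indicator_of_mem (by exact h), Set.indicator_of_mem (by exact h),
        max_eq_left h.le]
      ring
    · rw [Set.indicator_of_notMem (by exact h), Set.indicator_of_notMem (by exact h),
        max_eq_right (not_lt.mp h), SH.mFun_zero]
      ring
  rw [integral_congr_ae (Eventually.of_forall hpt)]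
  have hi1 := SH.integrable_pospart hmeas hsq x
  have hi2 : Integrable (fun ω => A * mFun X (max (x + X ω) 0)) ℙ := by
    exact (SH.mComp_integrable hmeas hsq x).const_mul A
  have hi3 : Integrable (fun ω => R * Set.indicator {ω | 0 < x + X ω} (fun _ => (1:ℝ)) ω) ℙ := by
    exact ((integrable_const (1:ℝ)).indicator hS).const_mul R
  have hi12 : Integrable (fun ω => max (x + X ω) 0 + A * mFun X (max (x + X ω) 0)) ℙ := by
    exact hi1.add hi2
  rw [integral_add hi12 hi3, integral_add hi1 hi2, integral_const_mul, integral_const_mul]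
  have hind : ∫ ω, Set.indicator {ω | 0 < x + X ω} (fun _ => (1:ℝ)) ω ∂ℙ
      = (ℙ {ω | 0 < x + X ω}).toReal := by
    rw [integral_indicator_const (1:ℝ) hS]
    simp [measureReal_def]
  rw [hind, SH.measure_split hmeas x, SH.I1 hmeas hsq hcent x]
  have hI2 := SH.I2 hmeas hsq hcent hx
  have hKb := hRb x hx
  unfold SH.Kf at hKb
  rw [← hA] at hKb
  have hI2' : A * (∫ ω, mFun X (max (x + X ω) 0) ∂ℙ)
      ≤ A * (mFun X x - aFun X x / 2 * (∫ ω, min (max (-X ω) 0) x ^ 2 ∂ℙ)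
        + bFun X x * aFun X x) := mul_le_mul_of_nonneg_left hI2 hApos.le
  nlinarith [hI2', hKb]
end
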